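/- Consider the randomized greedy freezing procedure with parameter p′ ∈ (0,1) in the CSP setting. Suppose that each constraint shares a variable with at most Δ other constraints, that ℙ[C] ≤ p for every C ∈ 𝒞, and that p ≤ p′/(10Δ³). Let ℱ = ⋃_{i≤s} ℱ_i be the (random) set of constraints declared dangerous at any stage, and let G²(ℱ) be the graph with vertex set ℱ and an edge between distinct Cᵢ, C_j ∈ ℱ if and only if dist_{G(𝒞)}(Cᵢ, C_j) ≤ 2. Then for every L ≥ 0, the ν-probability that G²(ℱ) has a connected component of size at least L is at most n·Δ·2^{−L/Δ}. -/

import Mathlib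

open Finset
open scoped Classical

/-! ## The CSP setting

A constraint satisfaction problem has variables `Fin n`, each taking values in `Fin q`
(the uniform product measure `ℙ` makes the variables independent and uniform), and
constraints `Fin m`; constraint `j` depends only on the variables in `vbl j`, and
`viol j σ` means that the assignment `σ` violates constraint `j`. -/

/-- A full assignment `σ` is compatible with (extends) the partial assignment `X`. -/
def Compat {n q : ℕ} (X : Fin n → Option (Fin q)) (σ : Fin n → Fin q) : Prop :=
  ∀ v a, X v = some a → σ v = a

/-- `condP viol j X` is the conditional probability `ℙ[C_j | X]` that constraint `j` is
violated, under the uniform product measure conditioned on agreeing with the partial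
assignment `X`. -/
noncomputable def condP {n q m : ℕ} (viol : Fin m → (Fin n → Fin q) → Prop)
    (j : Fin m) (X : Fin n → Option (Fin q)) : ℝ :=
  ((Finset.univ.filter fun σ : Fin n → Fin q => Compat X σ ∧ viol j σ).card : ℝ) /
    ((Finset.univ.filter fun σ : Fin n → Fin q => Compat X σ).card : ℝ)

/-- One step of the greedy freezing procedure, processing variable `i`, where the random
seed `ω` prescribes the value a variable receives when it is assigned. The state is a pair
(partial assignment, set of frozen variables). If `i` is frozen it is skipped; otherwise
`i` is assigned the value `ω i`, and every still-unassigned variable lying in a constraint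
that has become dangerous (conditional probability of violation exceeding `p'`) is frozen. -/
noncomputable def greedyStep {n q m : ℕ} (vbl : Fin m → Finset (Fin n))
    (viol : Fin m → (Fin n → Fin q) → Prop) (p' : ℝ) (ω : Fin n → Fin q)
    (st : (Fin n → Option (Fin q)) × Finset (Fin n)) (i : Fin n) :
    (Fin n → Option (Fin q)) × Finset (Fin n) :=
  if i ∈ st.2 then st
  else
    let X' := Function.update st.1 i (some (ω i))
    (X', st.2 ∪ Finset.univ.filter fun v =>
      X' v = none ∧ ∃ j, v ∈ vbl j ∧ p' < condP viol j X')

/-- `greedyRun vbl viol p' ω h` is the state of the greedy freezing procedure with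
parameter `p'` and random seed `ω` after the variables `v_1, …, v_h` (i.e. the first `h`
variables in the fixed order) have been processed: since the procedure always selects the
lowest-indexed available variable, processing the variables in index order — skipping
frozen ones — implements the procedure exactly, and the first component of
`greedyRun vbl viol p' ω h` is the partial assignment `P_{ι(h)}`, where `ι(h)` is the
number of variables among `v_1, …, v_h` that have been assigned values.
In particular `greedyRun vbl viol p' ω n` gives the final partial assignment `P_s`, and
as `ω` ranges uniformly over `Fin n → Fin q`, its law is the distribution `ν`. -/
noncomputable def greedyRun {n q m : ℕ} (vbl : Fin m → Finset (Fin n))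
    (viol : Fin m → (Fin n → Fin q) → Prop) (p' : ℝ) (ω : Fin n → Fin q) :
    ℕ → (Fin n → Option (Fin q)) × Finset (Fin n)
  | 0 => (fun _ => none, ∅)
  | h + 1 =>
    if hh : h < n then greedyStep vbl viol p' ω (greedyRun vbl viol p' ω h) ⟨h, hh⟩
    else greedyRun vbl viol p' ω h

/-- The constraint graph `G(𝒞)`: two distinct constraints are adjacent iff they share a
variable. -/
def constraintGraph {n m : ℕ} (vbl : Fin m → Finset (Fin n)) : SimpleGraph (Fin m) where
  Adj i j := i ≠ j ∧ (vbl i ∩ vbl j).Nonempty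
  symm := by
    constructor
    intro i j hij
    exact ⟨hij.1.symm, by rw [Finset.inter_comm]; exact hij.2⟩
  loopless := by
    constructor
    intro i hi
    exact hi.1 rfl

/-- The graph `G²(𝒞)`: two distinct constraints are adjacent iff their distance in the
constraint graph `G(𝒞)` is at most `2`. -/
def constraintGraphSq {n m : ℕ} (vbl : Fin m → Finset (Fin n)) : SimpleGraph (Fin m) where
  Adj i j := i ≠ j ∧ ((constraintGraph vbl).Adj i j ∨
    ∃ w, (constraintGraph vbl).Adj i w ∧ (constraintGraph vbl).Adj w j)
  symm := by
    constructor
    rintro i j ⟨hne, hadj | ⟨w, hw1, hw2⟩⟩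
    · exact ⟨hne.symm, Or.inl hadj.symm⟩
    · exact ⟨hne.symm, Or.inr ⟨w, hw2.symm, hw1.symm⟩⟩
  loopless := by
    constructor
    intro i hi
    exact hi.1 rfl

/-- `dangerous vbl viol p' ω` is the set `ℱ = ⋃_{i ∈ [s]} ℱ_i` of constraints declared
dangerous at some stage of the greedy freezing procedure with seed `ω`: constraints whose
conditional probability of violation given one of the partial assignments `P_i` (`i ≥ 1`)
of the procedure exceeds `p'`. -/
def dangerous {n q m : ℕ} (vbl : Fin m → Finset (Fin n))
    (viol : Fin m → (Fin n → Fin q) → Prop) (p' : ℝ) (ω : Fin n → Fin q) :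
    Set (Fin m) :=
  {j | ∃ h, 1 ≤ h ∧ h ≤ n ∧ p' < condP viol j (greedyRun vbl viol p' ω h).1}

section A
variable {n q m : ℕ}

/-- number of compatible assignments -/
lemma card_compat (X : Fin n → Option (Fin q)) :
    (Finset.univ.filter fun σ : Fin n → Fin q => Compat X σ).card
      = q ^ ((Finset.univ.filter fun v => X v = none).card) := by
  classical
  have e : {σ : Fin n → Fin q // Compat X σ} ≃ ({v : Fin n // X v = none} → Fin q) := by
    refine
      { toFun := fun σ v => σ.1 v.1
        invFun := fun f => ⟨fun v => match h : X v with
          | some a => a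
          | none => f ⟨v, h⟩, ?_⟩
        left_inv := ?_
        right_inv := ?_ }
    · intro v a hva
      simp only []
      split
      · next h => rw [h] at hva; exact (Option.some_injective _ hva)
      · next h => rw [h] at hva; exact absurd hva (by simp)
    · rintro ⟨σ, hσ⟩
      ext v
      simp only []
      split
      · next h => exact congrArg _ (hσ v _ h).symm
      · next h => rfl
    · intro f
      ext v
      simp only []
      split
      · next h => exact absurd v.2 (by rw [h]; simp)
      · next h => congr 1
  have h1 : (Finset.univ.filter fun σ : Fin n → Fin q => Compat X σ).card
      = Fintype.card {σ : Fin n → Fin q // Compat X σ} := by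
    rw [Fintype.card_subtype]
  rw [h1, Fintype.card_congr e, Fintype.card_fun, Fintype.card_fin, Fintype.card_subtype]

lemma card_compat_pos (hq : 0 < q) (X : Fin n → Option (Fin q)) :
    0 < (Finset.univ.filter fun σ : Fin n → Fin q => Compat X σ).card := by
  rw [card_compat]
  exact pow_pos hq _

lemma condP_nonneg (viol : Fin m → (Fin n → Fin q) → Prop) (j : Fin m)
    (X : Fin n → Option (Fin q)) : 0 ≤ condP viol j X :=
  div_nonneg (Nat.cast_nonneg _) (Nat.cast_nonneg _)

lemma condP_le_one (hq : 0 < q) (viol : Fin m → (Fin n → Fin q) → Prop) (j : Fin m)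
    (X : Fin n → Option (Fin q)) : condP viol j X ≤ 1 := by
  rw [condP, div_le_one]
  · have h : (Finset.univ.filter fun σ : Fin n → Fin q => Compat X σ ∧ viol j σ)
        ⊆ (Finset.univ.filter fun σ : Fin n → Fin q => Compat X σ) := by
      intro σ hσ
      simp only [Finset.mem_filter] at *
      exact ⟨hσ.1, hσ.2.1⟩
    exact_mod_cast Finset.card_le_card h
  · exact_mod_cast card_compat_pos hq X

end A

section A2
variable {n q m : ℕ}

lemma compat_update_iff {X : Fin n → Option (Fin q)} {i : Fin n} (hX : X i = none)
    (a : Fin q) (σ : Fin n → Fin q) :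
    Compat (Function.update X i (some a)) σ ↔ Compat X σ ∧ σ i = a := by
  constructor
  · intro h
    refine ⟨?_, h i a (by simp)⟩
    intro v b hvb
    rcases eq_or_ne v i with rfl | hne
    · rw [hX] at hvb; exact absurd hvb (by simp)
    · exact h v b (by rwa [Function.update_of_ne hne])
  · rintro ⟨h, hia⟩
    intro v b hvb
    rcases eq_or_ne v i with rfl | hne
    · rw [Function.update_self] at hvb
      rw [hia]; exact_mod_cast (Option.some_injective _ hvb)
    · rw [Function.update_of_ne hne] at hvb
      exact h v b hvb

lemma nones_update {X : Fin n → Option (Fin q)} {i : Fin n} (a : Fin q) :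
    (Finset.univ.filter fun v => Function.update X i (some a) v = none)
      = (Finset.univ.filter fun v => X v = none).erase i := by
  ext v
  simp only [Finset.mem_filter, Finset.mem_erase, Finset.mem_univ, true_and]
  rcases eq_or_ne v i with rfl | hne
  · simp
  · rw [Function.update_of_ne hne]
    tauto

lemma card_compat_update {X : Fin n → Option (Fin q)} {i : Fin n} (hX : X i = none)
    (a : Fin q) :
    (Finset.univ.filter fun σ : Fin n → Fin q => Compat (Function.update X i (some a)) σ).card
      = q ^ ((Finset.univ.filter fun v => X v = none).card - 1) := by
  rw [card_compat, nones_update, Finset.card_erase_of_mem (by simp [hX])]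

lemma num_partition (viol : Fin m → (Fin n → Fin q) → Prop) (j : Fin m)
    {X : Fin n → Option (Fin q)} {i : Fin n} (hX : X i = none) :
    (Finset.univ.filter fun σ : Fin n → Fin q => Compat X σ ∧ viol j σ).card
      = ∑ a : Fin q, (Finset.univ.filter fun σ : Fin n → Fin q =>
          Compat (Function.update X i (some a)) σ ∧ viol j σ).card := by
  classical
  have h1 : (Finset.univ.filter fun σ : Fin n → Fin q => Compat X σ ∧ viol j σ).card
      = ∑ a : Fin q, ((Finset.univ.filter fun σ : Fin n → Fin q => Compat X σ ∧ viol j σ).filter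
          fun σ => σ i = a).card :=
    Finset.card_eq_sum_card_fiberwise (by intro σ _; exact Finset.mem_univ _)
  rw [h1]
  refine Finset.sum_congr rfl fun a _ => ?_
  congr 1
  rw [Finset.filter_filter]
  apply Finset.filter_congr
  intro σ _
  rw [compat_update_iff hX]
  tauto

lemma sum_condP_update (hq : 0 < q) (viol : Fin m → (Fin n → Fin q) → Prop) (j : Fin m)
    {X : Fin n → Option (Fin q)} {i : Fin n} (hX : X i = none) :
    ∑ a : Fin q, condP viol j (Function.update X i (some a)) = q * condP viol j X := by
  classical
  set u := (Finset.univ.filter fun v => X v = none).card with hu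
  have hiu : i ∈ (Finset.univ.filter fun v => X v = none) := by simp [hX]
  have hupos : 0 < u := Finset.card_pos.mpr ⟨i, hiu⟩
  have hq1 : ((q : ℝ)) ^ u = q ^ (u - 1) * q := by
    rw [← pow_succ]; congr 1; omega
  have hqne : (q : ℝ) ≠ 0 := by positivity
  have hqu : ((q : ℝ)) ^ (u - 1) ≠ 0 := by positivity
  unfold condP
  rw [card_compat X, ← hu]
  have hden : ∀ a : Fin q,
      ((Finset.univ.filter fun σ : Fin n → Fin q =>
        Compat (Function.update X i (some a)) σ).card : ℝ) = (q : ℝ) ^ (u - 1) := by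
    intro a
    rw [card_compat_update hX]
    push_cast; rw [hu]
  have hsum := num_partition viol j hX
  calc ∑ a : Fin q, (((Finset.univ.filter fun σ : Fin n → Fin q =>
          Compat (Function.update X i (some a)) σ ∧ viol j σ).card : ℝ) /
        ((Finset.univ.filter fun σ : Fin n → Fin q =>
          Compat (Function.update X i (some a)) σ).card : ℝ))
      = (∑ a : Fin q, ((Finset.univ.filter fun σ : Fin n → Fin q =>
          Compat (Function.update X i (some a)) σ ∧ viol j σ).card : ℝ)) / (q : ℝ) ^ (u - 1) := by
        rw [Finset.sum_div]
        exact Finset.sum_congr rfl fun a _ => by rw [hden a]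
    _ = ((Finset.univ.filter fun σ : Fin n → Fin q => Compat X σ ∧ viol j σ).card : ℝ) /
          (q : ℝ) ^ (u - 1) := by
        congr 1
        rw [hsum]; push_cast; ring
    _ = (q : ℝ) * (((Finset.univ.filter fun σ : Fin n → Fin q =>
          Compat X σ ∧ viol j σ).card : ℝ) / (q : ℝ) ^ u) := by
        rw [hq1]; field_simp
    _ = (q : ℝ) * (((Finset.univ.filter fun σ : Fin n → Fin q =>
          Compat X σ ∧ viol j σ).card : ℝ) / ((q ^ u : ℕ) : ℝ)) := by push_cast; ring

end A2

section A3
variable {n q m : ℕ} {vbl : Fin m → Finset (Fin n)} {viol : Fin m → (Fin n → Fin q) → Prop}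

lemma num_const (hdep : ∀ j (σ τ : Fin n → Fin q), (∀ v ∈ vbl j, σ v = τ v) → (viol j σ ↔ viol j τ))
    (j : Fin m) {X : Fin n → Option (Fin q)} {i : Fin n} (hX : X i = none) (hi : i ∉ vbl j)
    (a b : Fin q) :
    (Finset.univ.filter fun σ : Fin n → Fin q =>
        Compat (Function.update X i (some a)) σ ∧ viol j σ).card
      = (Finset.univ.filter fun σ : Fin n → Fin q =>
        Compat (Function.update X i (some b)) σ ∧ viol j σ).card := by
  classical
  apply Finset.card_bij (fun σ _ => Function.update σ i b)
  · intro σ hσ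
    simp only [Finset.mem_filter, Finset.mem_univ, true_and] at hσ ⊢
    rw [compat_update_iff hX] at hσ ⊢
    obtain ⟨⟨hc, _⟩, hv⟩ := hσ
    refine ⟨⟨?_, Function.update_self _ _ _⟩, ?_⟩
    · intro v c hvc
      rcases eq_or_ne v i with rfl | hne
      · rw [hX] at hvc; exact absurd hvc (by simp)
      · rw [Function.update_of_ne hne]; exact hc v c hvc
    · refine (hdep j _ σ ?_).mpr hv
      intro v hv'
      exact Function.update_of_ne (fun h => hi (by rw [← h]; exact hv')) _ _
  · intro σ hσ τ hτ hst
    simp only [Finset.mem_filter, Finset.mem_univ, true_and] at hσ hτ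
    rw [compat_update_iff hX] at hσ hτ
    funext v
    rcases eq_or_ne v i with rfl | hne
    · rw [hσ.1.2, hτ.1.2]
    · have := congrFun hst v
      rwa [Function.update_of_ne hne, Function.update_of_ne hne] at this
  · intro τ hτ
    simp only [Finset.mem_filter, Finset.mem_univ, true_and] at hτ
    rw [compat_update_iff hX] at hτ
    refine ⟨Function.update τ i a, ?_, ?_⟩
    · simp only [Finset.mem_filter, Finset.mem_univ, true_and]
      rw [compat_update_iff hX]
      refine ⟨⟨?_, Function.update_self _ _ _⟩, ?_⟩
      · intro v c hvc
        rcases eq_or_ne v i with rfl | hne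
        · rw [hX] at hvc; exact absurd hvc (by simp)
        · rw [Function.update_of_ne hne]; exact hτ.1.1 v c hvc
      · refine (hdep j _ τ ?_).mpr hτ.2
        intro v hv'
        exact Function.update_of_ne (fun h => hi (by rw [← h]; exact hv')) _ _
    · funext v
      rcases eq_or_ne v i with rfl | hne
      · rw [Function.update_self, hτ.1.2]
      · rw [Function.update_of_ne hne, Function.update_of_ne hne]

lemma condP_update_of_not_mem (hq : 0 < q)
    (hdep : ∀ j (σ τ : Fin n → Fin q), (∀ v ∈ vbl j, σ v = τ v) → (viol j σ ↔ viol j τ))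
    (j : Fin m) {X : Fin n → Option (Fin q)} {i : Fin n} (hX : X i = none) (hi : i ∉ vbl j)
    (a : Fin q) :
    condP viol j (Function.update X i (some a)) = condP viol j X := by
  classical
  have hsum := num_partition viol j hX
  have hconst : ∀ b : Fin q,
      (Finset.univ.filter fun σ : Fin n → Fin q =>
        Compat (Function.update X i (some b)) σ ∧ viol j σ).card
      = (Finset.univ.filter fun σ : Fin n → Fin q =>
        Compat (Function.update X i (some a)) σ ∧ viol j σ).card :=
    fun b => num_const hdep j hX hi b a
  have hA : (Finset.univ.filter fun σ : Fin n → Fin q => Compat X σ ∧ viol j σ).card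
      = q * (Finset.univ.filter fun σ : Fin n → Fin q =>
          Compat (Function.update X i (some a)) σ ∧ viol j σ).card := by
    rw [hsum]
    rw [Finset.sum_congr rfl fun b _ => hconst b]
    simp [Finset.sum_const, Finset.card_univ]
  set u := (Finset.univ.filter fun v => X v = none).card with hu
  have hiu : i ∈ (Finset.univ.filter fun v => X v = none) := by simp [hX]
  have hupos : 0 < u := Finset.card_pos.mpr ⟨i, hiu⟩
  have hq1 : ((q : ℝ)) ^ u = q ^ (u - 1) * q := by
    rw [← pow_succ]; congr 1; omega
  have hqne : (q : ℝ) ≠ 0 := by positivity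
  have hqu : ((q : ℝ)) ^ (u - 1) ≠ 0 := by positivity
  unfold condP
  rw [card_compat X, ← hu, card_compat_update hX, ← hu, hA]
  push_cast
  rw [hq1]
  field_simp

lemma condP_of_vbl_empty (hq : 0 < q)
    (hdep : ∀ j (σ τ : Fin n → Fin q), (∀ v ∈ vbl j, σ v = τ v) → (viol j σ ↔ viol j τ))
    (j : Fin m) (hj : vbl j = ∅) (X : Fin n → Option (Fin q)) :
    condP viol j X = condP viol j (fun _ => none) := by
  classical
  have hconst : ∀ σ τ : Fin n → Fin q, viol j σ ↔ viol j τ := by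
    intro σ τ
    exact hdep j σ τ (by rw [hj]; intro v hv; exact absurd hv (by simp))
  by_cases h : ∃ σ₀ : Fin n → Fin q, viol j σ₀
  · obtain ⟨σ₀, hσ₀⟩ := h
    have hall : ∀ σ : Fin n → Fin q, viol j σ := fun σ => (hconst σ σ₀).mpr hσ₀
    have e1 : ∀ Y : Fin n → Option (Fin q),
        (Finset.univ.filter fun σ : Fin n → Fin q => Compat Y σ ∧ viol j σ)
        = (Finset.univ.filter fun σ : Fin n → Fin q => Compat Y σ) := by
      intro Y; apply Finset.filter_congr; intro σ _; simp [hall σ]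
    unfold condP
    rw [e1, e1, div_self, div_self]
    · exact_mod_cast (Nat.cast_pos.mpr (card_compat_pos hq _)).ne'
    · exact_mod_cast (Nat.cast_pos.mpr (card_compat_pos hq _)).ne'
  · push_neg at h
    have e1 : ∀ Y : Fin n → Option (Fin q),
        (Finset.univ.filter fun σ : Fin n → Fin q => Compat Y σ ∧ viol j σ) = ∅ := by
      intro Y
      apply Finset.filter_false_of_mem
      intro σ _
      intro hc; exact h σ hc.2
    unfold condP
    rw [e1, e1]
    simp

end A3


section B
variable {n q m : ℕ} (vbl : Fin m → Finset (Fin n)) (viol : Fin m → (Fin n → Fin q) → Prop)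
  (p' : ℝ) (ω : Fin n → Fin q)

lemma run_zero : greedyRun vbl viol p' ω 0 = (fun _ => none, ∅) := rfl

lemma run_succ_of_ge {h : ℕ} (hh : n ≤ h) :
    greedyRun vbl viol p' ω (h + 1) = greedyRun vbl viol p' ω h := by
  rw [greedyRun, dif_neg (by omega)]

lemma run_succ_cases {h : ℕ} (hh : h < n) :
    greedyRun vbl viol p' ω (h + 1) = greedyRun vbl viol p' ω h ∨
    ((⟨h, hh⟩ : Fin n) ∉ (greedyRun vbl viol p' ω h).2 ∧
      greedyRun vbl viol p' ω (h + 1) =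
        (Function.update (greedyRun vbl viol p' ω h).1 ⟨h, hh⟩ (some (ω ⟨h, hh⟩)),
         (greedyRun vbl viol p' ω h).2 ∪ Finset.univ.filter fun v =>
            Function.update (greedyRun vbl viol p' ω h).1 ⟨h, hh⟩ (some (ω ⟨h, hh⟩)) v = none ∧
            ∃ j, v ∈ vbl j ∧ p' < condP viol j
              (Function.update (greedyRun vbl viol p' ω h).1 ⟨h, hh⟩ (some (ω ⟨h, hh⟩))))) := by
  rw [greedyRun, dif_pos hh, greedyStep]
  by_cases hf : (⟨h, hh⟩ : Fin n) ∈ (greedyRun vbl viol p' ω h).2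
  · left; rw [if_pos hf]
  · right
    exact ⟨hf, by rw [if_neg hf]⟩

lemma run_fst_none {h : ℕ} {v : Fin n} (hv : h ≤ v.val) :
    (greedyRun vbl viol p' ω h).1 v = none := by
  induction h with
  | zero => rfl
  | succ k ih =>
    rcases Nat.lt_or_ge k n with hh | hh
    · rcases run_succ_cases vbl viol p' ω hh with he | ⟨_, he⟩
      · rw [he]; exact ih (by omega)
      · rw [he]
        simp only
        rw [Function.update_of_ne (by intro hc; rw [hc] at hv; exact absurd hv (by simp))]
        exact ih (by omega)
    · rw [run_succ_of_ge vbl viol p' ω hh]; exact ih (by omega)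

/-- every variable of `vbl j` is assigned or frozen -/
def SettledSt {n q : ℕ} (vbl : Fin m → Finset (Fin n)) (j : Fin m)
    (st : (Fin n → Option (Fin q)) × Finset (Fin n)) : Prop :=
  ∀ v ∈ vbl j, st.1 v ≠ none ∨ v ∈ st.2

lemma settled_step (hq : 0 < q)
    (hdep : ∀ j (σ τ : Fin n → Fin q), (∀ v ∈ vbl j, σ v = τ v) → (viol j σ ↔ viol j τ))
    {j : Fin m} {h : ℕ} (hs : SettledSt vbl j (greedyRun vbl viol p' ω h)) :
    SettledSt vbl j (greedyRun vbl viol p' ω (h + 1)) ∧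
      condP viol j (greedyRun vbl viol p' ω (h + 1)).1
        = condP viol j (greedyRun vbl viol p' ω h).1 := by
  rcases Nat.lt_or_ge h n with hh | hh
  · rcases run_succ_cases vbl viol p' ω hh with he | ⟨hf, he⟩
    · rw [he]; exact ⟨hs, rfl⟩
    · have hXi : (greedyRun vbl viol p' ω h).1 ⟨h, hh⟩ = none :=
        run_fst_none vbl viol p' ω (le_refl h)
      have hi_not : (⟨h, hh⟩ : Fin n) ∉ vbl j := by
        intro hmem
        rcases hs _ hmem with hc | hc
        · exact hc hXi
        · exact hf hc
      constructor
      · intro v hv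
        rw [he]
        simp only
        have hvne : v ≠ ⟨h, hh⟩ := fun hc => hi_not (hc ▸ hv)
        rw [Function.update_of_ne hvne]
        rcases hs v hv with hc | hc
        · exact Or.inl hc
        · exact Or.inr (Finset.mem_union_left _ hc)
      · rw [he]
        exact condP_update_of_not_mem hq hdep j hXi hi_not _
  · rw [run_succ_of_ge vbl viol p' ω hh]; exact ⟨hs, rfl⟩

lemma dangerous_start (hq : 0 < q)
    (hdep : ∀ j (σ τ : Fin n → Fin q), (∀ v ∈ vbl j, σ v = τ v) → (viol j σ ↔ viol j τ))
    {j : Fin m}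
    (hbase : ¬ p' < condP viol j (fun _ => none : Fin n → Option (Fin q)))
    {h : ℕ} (hd : p' < condP viol j (greedyRun vbl viol p' ω h).1) :
    SettledSt vbl j (greedyRun vbl viol p' ω h) := by
  induction h with
  | zero => exact absurd hd hbase
  | succ k ih =>
    rcases Nat.lt_or_ge k n with hh | hh
    · rcases run_succ_cases vbl viol p' ω hh with he | ⟨hf, he⟩
      · rw [he] at hd ⊢; exact ih hd
      · rw [he] at hd ⊢
        intro v hv
        by_cases hnone : (Function.update (greedyRun vbl viol p' ω k).1 ⟨k, hh⟩
            (some (ω ⟨k, hh⟩))) v = none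
        · right
          simp only
          apply Finset.mem_union_right
          simp only [Finset.mem_filter, Finset.mem_univ, true_and]
          exact ⟨hnone, j, hv, hd⟩
        · left; exact hnone
    · rw [run_succ_of_ge vbl viol p' ω hh] at hd ⊢; exact ih hd

lemma dangerous_at_n (hq : 0 < q)
    (hdep : ∀ j (σ τ : Fin n → Fin q), (∀ v ∈ vbl j, σ v = τ v) → (viol j σ ↔ viol j τ))
    {j : Fin m}
    (hbase : ¬ p' < condP viol j (fun _ => none : Fin n → Option (Fin q)))
    (hj : j ∈ dangerous vbl viol p' ω) :
    p' < condP viol j (greedyRun vbl viol p' ω n).1 := by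
  obtain ⟨h, _, hhn, hd⟩ := hj
  have key : ∀ d : ℕ, SettledSt vbl j (greedyRun vbl viol p' ω (h + d)) ∧
      p' < condP viol j (greedyRun vbl viol p' ω (h + d)).1 := by
    intro d
    induction d with
    | zero => exact ⟨dangerous_start vbl viol p' ω hq hdep hbase hd, hd⟩
    | succ e ih =>
      obtain ⟨hs, hcond⟩ := ih
      obtain ⟨hs', heq⟩ := settled_step vbl viol p' ω hq hdep hs
      rw [← Nat.add_assoc] at *
      exact ⟨hs', by rw [heq]; exact hcond⟩
  have := (key (n - h)).2
  rwa [Nat.add_sub_cancel' hhn] at this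

end B


section C
variable {n q m : ℕ} (vbl : Fin m → Finset (Fin n)) (viol : Fin m → (Fin n → Fin q) → Prop)
  (p' : ℝ)

lemma greedyStep_congr {ω ω' : Fin n → Fin q} {st : (Fin n → Option (Fin q)) × Finset (Fin n)}
    {i : Fin n} (h : ω i = ω' i) :
    greedyStep vbl viol p' ω st i = greedyStep vbl viol p' ω' st i := by
  unfold greedyStep
  rw [h]

lemma run_congr {ω ω' : Fin n → Fin q} {h : ℕ} (hagree : ∀ i : Fin n, i.val < h → ω i = ω' i) :
    greedyRun vbl viol p' ω h = greedyRun vbl viol p' ω' h := by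
  induction h with
  | zero => rfl
  | succ k ih =>
    have ih' := ih (fun i hi => hagree i (by omega))
    rw [greedyRun]
    conv_rhs => rw [greedyRun]
    split_ifs with hh
    · rw [ih', greedyStep_congr vbl viol p' (hagree ⟨k, hh⟩ (by simp))]
    · exact ih'

lemma sum_prod_condP_update (hq : 0 < q)
    (hdep : ∀ j (σ τ : Fin n → Fin q), (∀ v ∈ vbl j, σ v = τ v) → (viol j σ ↔ viol j τ))
    {T : Finset (Fin m)}
    (hdisj : ∀ j ∈ T, ∀ k ∈ T, j ≠ k → vbl j ∩ vbl k = ∅)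
    {X : Fin n → Option (Fin q)} {i : Fin n} (hX : X i = none) :
    ∑ a : Fin q, ∏ j ∈ T, condP viol j (Function.update X i (some a))
      = q * ∏ j ∈ T, condP viol j X := by
  classical
  by_cases hex : ∃ j₀ ∈ T, i ∈ vbl j₀
  · obtain ⟨j₀, hj₀T, hij₀⟩ := hex
    have hoth : ∀ j ∈ T.erase j₀, ∀ a : Fin q,
        condP viol j (Function.update X i (some a)) = condP viol j X := by
      intro j hj a
      apply condP_update_of_not_mem hq hdep j hX
      intro hij
      have hne : j ≠ j₀ := (Finset.mem_erase.mp hj).1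
      have hd := hdisj j (Finset.mem_of_mem_erase hj) j₀ hj₀T hne
      have : i ∈ vbl j ∩ vbl j₀ := Finset.mem_inter.mpr ⟨hij, hij₀⟩
      rw [hd] at this
      exact absurd this (Finset.notMem_empty i)
    calc ∑ a : Fin q, ∏ j ∈ T, condP viol j (Function.update X i (some a))
        = ∑ a : Fin q, condP viol j₀ (Function.update X i (some a)) *
            ∏ j ∈ T.erase j₀, condP viol j X := by
          refine Finset.sum_congr rfl fun a _ => ?_
          rw [← Finset.mul_prod_erase T _ hj₀T]
          exact congrArg _ (Finset.prod_congr rfl fun j hj => hoth j hj a)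
      _ = (∑ a : Fin q, condP viol j₀ (Function.update X i (some a))) *
            ∏ j ∈ T.erase j₀, condP viol j X := by rw [Finset.sum_mul]
      _ = (q * condP viol j₀ X) * ∏ j ∈ T.erase j₀, condP viol j X := by
          rw [sum_condP_update hq viol j₀ hX]
      _ = q * ∏ j ∈ T, condP viol j X := by
          rw [← Finset.mul_prod_erase T _ hj₀T]; ring
  · push_neg at hex
    have heq : ∀ a : Fin q, ∏ j ∈ T, condP viol j (Function.update X i (some a))
        = ∏ j ∈ T, condP viol j X := fun a =>
      Finset.prod_congr rfl fun j hj => condP_update_of_not_mem hq hdep j hX (hex j hj) a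
    rw [Finset.sum_congr rfl fun a _ => heq a]
    rw [Finset.sum_const, Finset.card_univ, Fintype.card_fin, nsmul_eq_mul]

lemma sum_prod_condP_succ (hq : 0 < q)
    (hdep : ∀ j (σ τ : Fin n → Fin q), (∀ v ∈ vbl j, σ v = τ v) → (viol j σ ↔ viol j τ))
    {T : Finset (Fin m)}
    (hdisj : ∀ j ∈ T, ∀ k ∈ T, j ≠ k → vbl j ∩ vbl k = ∅) (h : ℕ) :
    ∑ ω : Fin n → Fin q, ∏ j ∈ T, condP viol j (greedyRun vbl viol p' ω (h + 1)).1
      = ∑ ω : Fin n → Fin q, ∏ j ∈ T, condP viol j (greedyRun vbl viol p' ω h).1 := by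
  classical
  rcases Nat.lt_or_ge h n with hh | hh
  · set i : Fin n := ⟨h, hh⟩ with hi
    set e := (Equiv.funSplitAt i (Fin q)).symm with he
    have ha : ∀ (a : Fin q) (g : { j : Fin n // j ≠ i } → Fin q), e (a, g) i = a := by
      intro a g
      simp [he, Equiv.funSplitAt, Equiv.piSplitAt]
    have hagree : ∀ (a b : Fin q) (g : { j : Fin n // j ≠ i } → Fin q),
        greedyRun vbl viol p' (e (a, g)) h = greedyRun vbl viol p' (e (b, g)) h := by
      intro a b g
      apply run_congr
      intro i' hi'
      have hne : i' ≠ i := by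
        intro hc
        rw [hc] at hi'
        simp [hi] at hi'
      simp [he, Equiv.funSplitAt, Equiv.piSplitAt, dif_neg hne]
    set a₀ : Fin q := ⟨0, hq⟩ with ha₀
    set st : ({ j : Fin n // j ≠ i } → Fin q) → (Fin n → Option (Fin q)) × Finset (Fin n) :=
      fun g => greedyRun vbl viol p' (e (a₀, g)) h with hst
    have hstep : ∀ (a : Fin q) (g : { j : Fin n // j ≠ i } → Fin q),
        greedyRun vbl viol p' (e (a, g)) (h + 1)
          = greedyStep vbl viol p' (fun _ => a) (st g) i := by
      intro a g
      rw [greedyRun, dif_pos hh, ← hi, hagree a a₀ g]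
      exact greedyStep_congr vbl viol p' (by rw [ha])
    have hinner : ∀ g : { j : Fin n // j ≠ i } → Fin q,
        ∑ a : Fin q, ∏ j ∈ T, condP viol j (greedyStep vbl viol p' (fun _ => a) (st g) i).1
          = q * ∏ j ∈ T, condP viol j (st g).1 := by
      intro g
      by_cases hf : i ∈ (st g).2
      · rw [Finset.sum_congr rfl fun a _ => by rw [greedyStep, if_pos hf]]
        rw [Finset.sum_const, Finset.card_univ, Fintype.card_fin, nsmul_eq_mul]
      · have hXi : (st g).1 i = none := run_fst_none vbl viol p' _ (le_refl h)
        have hred : ∀ a : Fin q, (greedyStep vbl viol p' (fun _ => a) (st g) i).1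
            = Function.update (st g).1 i (some a) := by
          intro a
          rw [greedyStep, if_neg hf]
        rw [Finset.sum_congr rfl fun a _ => by rw [hred a]]
        exact sum_prod_condP_update vbl viol hq hdep hdisj hXi
    have reindex : ∀ F : (Fin n → Fin q) → ℝ,
        ∑ ω : Fin n → Fin q, F ω
          = ∑ g : { j : Fin n // j ≠ i } → Fin q, ∑ a : Fin q, F (e (a, g)) := by
      intro F
      rw [← Equiv.sum_comp e F, Fintype.sum_prod_type]
      exact Finset.sum_comm
    rw [reindex, reindex]
    refine Finset.sum_congr rfl fun g _ => ?_
    rw [Finset.sum_congr rfl fun a _ => by rw [hstep a g], hinner g]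
    rw [Finset.sum_congr rfl fun a _ => by rw [hagree a a₀ g]]
    rw [Finset.sum_const, Finset.card_univ, Fintype.card_fin, nsmul_eq_mul]
  · exact Finset.sum_congr rfl fun ω _ => by rw [run_succ_of_ge vbl viol p' ω hh]

lemma sum_prod_condP_run (hq : 0 < q)
    (hdep : ∀ j (σ τ : Fin n → Fin q), (∀ v ∈ vbl j, σ v = τ v) → (viol j σ ↔ viol j τ))
    {T : Finset (Fin m)}
    (hdisj : ∀ j ∈ T, ∀ k ∈ T, j ≠ k → vbl j ∩ vbl k = ∅) (h : ℕ) :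
    ∑ ω : Fin n → Fin q, ∏ j ∈ T, condP viol j (greedyRun vbl viol p' ω h).1
      = (q : ℝ) ^ n * ∏ j ∈ T, condP viol j (fun _ => none : Fin n → Option (Fin q)) := by
  induction h with
  | zero =>
    have : ∀ ω : Fin n → Fin q, ∏ j ∈ T, condP viol j (greedyRun vbl viol p' ω 0).1
        = ∏ j ∈ T, condP viol j (fun _ => none : Fin n → Option (Fin q)) := fun ω => rfl
    rw [Finset.sum_congr rfl fun ω _ => this ω, Finset.sum_const, Finset.card_univ,
      Fintype.card_fun, Fintype.card_fin, Fintype.card_fin, nsmul_eq_mul]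
    push_cast
    ring
  | succ k ih =>
    rw [sum_prod_condP_succ vbl viol p' hq hdep hdisj k, ih]

end C


section D
variable {n q m : ℕ} (vbl : Fin m → Finset (Fin n)) (viol : Fin m → (Fin n → Fin q) → Prop)
  (p' : ℝ)

lemma card_dangerous_le (hq : 0 < q)
    (hdep : ∀ j (σ τ : Fin n → Fin q), (∀ v ∈ vbl j, σ v = τ v) → (viol j σ ↔ viol j τ))
    {T : Finset (Fin m)}
    (hdisj : ∀ j ∈ T, ∀ k ∈ T, j ≠ k → vbl j ∩ vbl k = ∅) (hp'pos : 0 < p') :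
    ((Finset.univ.filter fun ω : Fin n → Fin q =>
        ∀ j ∈ T, p' < condP viol j (greedyRun vbl viol p' ω n).1).card : ℝ) * p' ^ T.card
      ≤ (q : ℝ) ^ n * ∏ j ∈ T, condP viol j (fun _ => none : Fin n → Option (Fin q)) := by
  classical
  set S := Finset.univ.filter fun ω : Fin n → Fin q =>
      ∀ j ∈ T, p' < condP viol j (greedyRun vbl viol p' ω n).1 with hS
  have h1 : ∀ ω ∈ S, p' ^ T.card ≤ ∏ j ∈ T, condP viol j (greedyRun vbl viol p' ω n).1 := by
    intro ω hω
    rw [hS, Finset.mem_filter] at hω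
    rw [← Finset.prod_const]
    exact Finset.prod_le_prod (fun j _ => le_of_lt hp'pos)
      (fun j hj => le_of_lt (hω.2 j hj))
  calc (S.card : ℝ) * p' ^ T.card
      = ∑ _ω ∈ S, p' ^ T.card := by rw [Finset.sum_const, nsmul_eq_mul]
    _ ≤ ∑ ω ∈ S, ∏ j ∈ T, condP viol j (greedyRun vbl viol p' ω n).1 :=
        Finset.sum_le_sum h1
    _ ≤ ∑ ω : Fin n → Fin q, ∏ j ∈ T, condP viol j (greedyRun vbl viol p' ω n).1 := by
        apply Finset.sum_le_sum_of_subset_of_nonneg (Finset.filter_subset _ _)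
        intro ω _ _
        exact Finset.prod_nonneg fun j _ => condP_nonneg viol j _
    _ = (q : ℝ) ^ n * ∏ j ∈ T, condP viol j (fun _ => none : Fin n → Option (Fin q)) :=
        sum_prod_condP_run vbl viol p' hq hdep hdisj n

end D


section E1
variable {n m : ℕ}

/-- neighbours of a constraint in the constraint graph -/
def nbrs (vbl : Fin m → Finset (Fin n)) (i : Fin m) : Finset (Fin m) :=
  Finset.univ.filter fun j => j ≠ i ∧ (vbl i ∩ vbl j).Nonempty

lemma mem_nbrs {vbl : Fin m → Finset (Fin n)} {i k : Fin m} :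
    k ∈ nbrs vbl i ↔ k ≠ i ∧ (vbl i ∩ vbl k).Nonempty := by
  simp [nbrs]

lemma nbrs_symm {vbl : Fin m → Finset (Fin n)} {i k : Fin m} (h : k ∈ nbrs vbl i) :
    i ∈ nbrs vbl k := by
  rw [mem_nbrs] at h ⊢
  exact ⟨h.1.symm, by rw [Finset.inter_comm]; exact h.2⟩

/-- adjacency for `{2,3}`-trees: disjoint variable sets but joined by a walk of length 2 or 3
in the constraint graph -/
def HAdj (vbl : Fin m → Finset (Fin n)) (j k : Fin m) : Prop :=
  j ≠ k ∧ vbl j ∩ vbl k = ∅ ∧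
    ((∃ w ∈ nbrs vbl j, k ∈ nbrs vbl w) ∨
     (∃ w ∈ nbrs vbl j, ∃ w' ∈ nbrs vbl w, w' ≠ j ∧ k ∈ nbrs vbl w'))

lemma card_HAdj_le {vbl : Fin m → Finset (Fin n)} {Δ : ℕ} (hΔ : 1 ≤ Δ)
    (hdeg : ∀ i, (nbrs vbl i).card ≤ Δ) (j : Fin m) :
    (Finset.univ.filter fun k => HAdj vbl j k).card ≤ Δ * Δ * (Δ - 1) := by
  classical
  set A2 := (nbrs vbl j).biUnion (fun w => (nbrs vbl w).erase j) with hA2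
  set A3 := (nbrs vbl j).biUnion
      (fun w => ((nbrs vbl w).erase j).biUnion (fun w' => (nbrs vbl w').erase w)) with hA3
  have hsub : (Finset.univ.filter fun k => HAdj vbl j k) ⊆ A2 ∪ A3 := by
    intro k hk
    rw [Finset.mem_filter] at hk
    obtain ⟨-, hne, hdisj, htwo | hthree⟩ := hk
    · obtain ⟨w, hw, hkw⟩ := htwo
      apply Finset.mem_union_left
      rw [hA2, Finset.mem_biUnion]
      exact ⟨w, hw, Finset.mem_erase.mpr ⟨fun hc => hne hc.symm, hkw⟩⟩
    · obtain ⟨w, hw, w', hw', hw'j, hkw'⟩ := hthree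
      apply Finset.mem_union_right
      rw [hA3, Finset.mem_biUnion]
      refine ⟨w, hw, Finset.mem_biUnion.mpr ⟨w', Finset.mem_erase.mpr ⟨hw'j, hw'⟩, ?_⟩⟩
      refine Finset.mem_erase.mpr ⟨?_, hkw'⟩
      intro hc
      subst hc
      rw [mem_nbrs] at hw
      obtain ⟨v, hv⟩ := hw.2
      rw [Finset.mem_inter] at hv
      have : v ∈ vbl j ∩ vbl k := Finset.mem_inter.mpr ⟨hv.1, hv.2⟩
      rw [hdisj] at this
      exact absurd this (Finset.notMem_empty v)
  calc (Finset.univ.filter fun k => HAdj vbl j k).card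
      ≤ (A2 ∪ A3).card := Finset.card_le_card hsub
    _ ≤ A2.card + A3.card := Finset.card_union_le _ _
    _ ≤ Δ * (Δ - 1) + Δ * ((Δ - 1) * (Δ - 1)) := by
        gcongr
        · calc A2.card ≤ ∑ w ∈ nbrs vbl j, ((nbrs vbl w).erase j).card :=
                Finset.card_biUnion_le
            _ ≤ ∑ _w ∈ nbrs vbl j, (Δ - 1) := by
                apply Finset.sum_le_sum
                intro w hw
                rw [Finset.card_erase_of_mem (nbrs_symm hw)]
                have := hdeg w
                omega
            _ ≤ Δ * (Δ - 1) := by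
                rw [Finset.sum_const, smul_eq_mul]
                exact Nat.mul_le_mul_right _ (hdeg j)
        · calc A3.card ≤ ∑ w ∈ nbrs vbl j,
                (((nbrs vbl w).erase j).biUnion (fun w' => (nbrs vbl w').erase w)).card :=
                Finset.card_biUnion_le
            _ ≤ ∑ _w ∈ nbrs vbl j, ((Δ - 1) * (Δ - 1)) := by
                apply Finset.sum_le_sum
                intro w hw
                calc (((nbrs vbl w).erase j).biUnion (fun w' => (nbrs vbl w').erase w)).card
                    ≤ ∑ w' ∈ (nbrs vbl w).erase j, ((nbrs vbl w').erase w).card :=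
                      Finset.card_biUnion_le
                  _ ≤ ∑ _w' ∈ (nbrs vbl w).erase j, (Δ - 1) := by
                      apply Finset.sum_le_sum
                      intro w' hw'
                      rw [Finset.card_erase_of_mem (nbrs_symm (Finset.mem_of_mem_erase hw'))]
                      have := hdeg w'
                      omega
                  _ ≤ (Δ - 1) * (Δ - 1) := by
                      rw [Finset.sum_const, smul_eq_mul]
                      apply Nat.mul_le_mul_right
                      rw [Finset.card_erase_of_mem (nbrs_symm hw)]
                      have := hdeg w
                      omega
            _ ≤ Δ * ((Δ - 1) * (Δ - 1)) := by
                rw [Finset.sum_const, smul_eq_mul]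
                exact Nat.mul_le_mul_right _ (hdeg j)
    _ = Δ * Δ * (Δ - 1) := by
        obtain ⟨D, rfl⟩ : ∃ D, Δ = D + 1 := ⟨Δ - 1, by omega⟩
        simp only [Nat.add_sub_cancel]
        ring

/-- incrementally grown (`{2,3}`-tree-like) sets: each new element is `HAdj`-attached to an
earlier one -/
inductive Linked (HA : Fin m → Fin m → Prop) (j₀ : Fin m) : Finset (Fin m) → Prop
  | base : Linked HA j₀ {j₀}
  | step {T : Finset (Fin m)} {t x : Fin m} :
      Linked HA j₀ T → t ∈ T → HA t x → x ∉ T → Linked HA j₀ (insert x T)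

lemma Linked.root_mem {HA : Fin m → Fin m → Prop} {j₀ : Fin m} {T : Finset (Fin m)}
    (h : Linked HA j₀ T) : j₀ ∈ T := by
  induction h with
  | base => exact Finset.mem_singleton_self _
  | step _ _ _ _ ih => exact Finset.mem_insert_of_mem ih

lemma Linked.shrink {HA : Fin m → Fin m → Prop} {j₀ : Fin m} {T : Finset (Fin m)}
    (h : Linked HA j₀ T) : ∀ r, 1 ≤ r → r ≤ T.card →
      ∃ T' : Finset (Fin m), T' ⊆ T ∧ Linked HA j₀ T' ∧ T'.card = r := by
  induction h with
  | base =>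
    intro r h1 h2
    rw [Finset.card_singleton] at h2
    exact ⟨{j₀}, Finset.Subset.refl _, Linked.base, by rw [Finset.card_singleton]; omega⟩
  | @step T t x hT htT hadj hxT ih =>
    intro r h1 h2
    rw [Finset.card_insert_of_notMem hxT] at h2
    rcases Nat.lt_or_ge r (T.card + 1) with hlt | hge
    · obtain ⟨T', hsub, hlink, hcard⟩ := ih r h1 (by omega)
      exact ⟨T', hsub.trans (Finset.subset_insert _ _), hlink, hcard⟩
    · refine ⟨insert x T, Finset.Subset.refl _, Linked.step hT htT hadj hxT, ?_⟩
      rw [Finset.card_insert_of_notMem hxT]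
      omega

end E1


section E2
variable {n m : ℕ}

lemma connected_closure {G : SimpleGraph (Fin m)} {B : Finset (Fin m)}
    (hconn : (G.induce (B : Set (Fin m))).Connected)
    {S : Finset (Fin m)} (hSB : ∀ x ∈ B, (∃ s ∈ S, G.Adj s x) → x ∈ S)
    {b₀ : Fin m} (hb₀B : b₀ ∈ B) (hb₀S : b₀ ∈ S) : ∀ b ∈ B, b ∈ S := by
  classical
  have key : ∀ (u v : (B : Set (Fin m))), (G.induce (B : Set (Fin m))).Walk u v →
      (u : Fin m) ∈ S → (v : Fin m) ∈ S := by
    intro u v w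
    induction w with
    | nil => exact id
    | @cons a b c hadj _ ih =>
      intro haS
      apply ih
      have hGadj : G.Adj (a : Fin m) (b : Fin m) := hadj
      exact hSB _ b.2 ⟨a, haS, hGadj⟩
  intro b hb
  obtain ⟨w⟩ := hconn.preconnected ⟨b₀, hb₀B⟩ ⟨b, hb⟩
  exact key _ _ w hb₀S

lemma extraction {vbl : Fin m → Finset (Fin n)} {Δ : ℕ}
    (hdeg : ∀ i, (nbrs vbl i).card ≤ Δ) {B : Finset (Fin m)}
    (hconn : ((constraintGraphSq vbl).induce (B : Set (Fin m))).Connected)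
    (hBne : B.Nonempty) :
    ∃ T : Finset (Fin m), T ⊆ B ∧ Linked (HAdj vbl) (B.min' hBne) T ∧
      (∀ j ∈ T, ∀ k ∈ T, j ≠ k → vbl j ∩ vbl k = ∅) ∧
      B.card ≤ T.card * (Δ + 1) := by
  classical
  set b₀ := B.min' hBne with hb₀
  have hb₀B : b₀ ∈ B := B.min'_mem hBne
  set F := B.powerset.filter (fun T => Linked (HAdj vbl) b₀ T ∧
      ∀ j ∈ T, ∀ k ∈ T, j ≠ k → vbl j ∩ vbl k = ∅) with hF
  have hFne : F.Nonempty := by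
    refine ⟨{b₀}, ?_⟩
    rw [hF, Finset.mem_filter, Finset.mem_powerset]
    refine ⟨Finset.singleton_subset_iff.mpr hb₀B, Linked.base, ?_⟩
    intro j hj k hk hjk
    rw [Finset.mem_singleton] at hj hk
    exact absurd (hj.trans hk.symm) hjk
  obtain ⟨T, hTF, hTmax⟩ := F.exists_max_image Finset.card hFne
  rw [hF, Finset.mem_filter, Finset.mem_powerset] at hTF
  obtain ⟨hTB, hTlink, hTdisj⟩ := hTF
  refine ⟨T, hTB, hTlink, hTdisj, ?_⟩
  -- closure set
  set S := B.filter (fun b => ∃ t ∈ T, b = t ∨ b ∈ nbrs vbl t) with hS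
  have hclosed : ∀ x ∈ B, (∃ s ∈ S, (constraintGraphSq vbl).Adj s x) → x ∈ S := by
    intro x hxB ⟨s, hsS, hadj⟩
    by_contra hxS
    -- x is vbl-disjoint from every element of T
    have hdisjx : ∀ t ∈ T, x ≠ t ∧ vbl t ∩ vbl x = ∅ := by
      intro t ht
      have hnot : ¬ (x = t ∨ x ∈ nbrs vbl t) := by
        intro hc
        exact hxS (by rw [hS, Finset.mem_filter]; exact ⟨hxB, t, ht, hc⟩)
      push_neg at hnot
      obtain ⟨hne, hnn⟩ := hnot
      rw [mem_nbrs] at hnn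
      refine ⟨hne, ?_⟩
      by_contra hcc
      exact hnn ⟨hne, Finset.nonempty_iff_ne_empty.mpr hcc⟩
    rw [hS, Finset.mem_filter] at hsS
    obtain ⟨hsB, t₀, ht₀T, hcase⟩ := hsS
    obtain ⟨hsx, hwalk⟩ := hadj
    -- produce HAdj t₀ x
    have hHAdj : HAdj vbl t₀ x := by
      refine ⟨fun hc => (hdisjx t₀ ht₀T).1 hc.symm, (hdisjx t₀ ht₀T).2, ?_⟩
      have hGsq : (constraintGraph vbl).Adj s x ∨
          ∃ w, (constraintGraph vbl).Adj s w ∧ (constraintGraph vbl).Adj w x := hwalk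
      rcases hcase with rfl | hsnb
      · rcases hGsq with h1 | ⟨w, hw1, hw2⟩
        · exfalso
          obtain ⟨hne, hnn⟩ := h1
          rw [(hdisjx _ ht₀T).2] at hnn
          exact absurd hnn (by simp)
        · left
          refine ⟨w, mem_nbrs.mpr ⟨hw1.1.symm, hw1.2⟩, mem_nbrs.mpr ⟨hw2.1.symm, hw2.2⟩⟩
      · rcases hGsq with h1 | ⟨w, hw1, hw2⟩
        · left
          exact ⟨s, hsnb, mem_nbrs.mpr ⟨h1.1.symm, h1.2⟩⟩
        · right
          refine ⟨s, hsnb, w, mem_nbrs.mpr ⟨hw1.1.symm, hw1.2⟩, ?_, 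
            mem_nbrs.mpr ⟨hw2.1.symm, hw2.2⟩⟩
          intro hc
          subst hc
          obtain ⟨hne, hnn⟩ := hw2
          rw [(hdisjx _ ht₀T).2] at hnn
          exact absurd hnn (by simp)
    -- extend T, contradicting maximality
    have hxT : x ∉ T := fun hc => (hdisjx x hc).1 rfl
    have hT' : insert x T ∈ F := by
      rw [hF, Finset.mem_filter, Finset.mem_powerset]
      refine ⟨Finset.insert_subset hxB hTB, Linked.step hTlink ht₀T hHAdj hxT, ?_⟩
      intro j hj k hk hjk
      rcases Finset.mem_insert.mp hj with rfl | hjT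
      · rcases Finset.mem_insert.mp hk with rfl | hkT
        · exact absurd rfl hjk
        · rw [Finset.inter_comm]
          exact (hdisjx k hkT).2
      · rcases Finset.mem_insert.mp hk with rfl | hkT
        · exact (hdisjx j hjT).2
        · exact hTdisj j hjT k hkT hjk
    have := hTmax _ hT'
    rw [Finset.card_insert_of_notMem hxT] at this
    omega
  have hcover := connected_closure hconn hclosed hb₀B
      (by rw [hS, Finset.mem_filter]
          exact ⟨hb₀B, b₀, hTlink.root_mem, Or.inl rfl⟩)
  -- now bound the size of B
  have hsub : B ⊆ T.biUnion (fun t => insert t (nbrs vbl t)) := by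
    intro b hb
    have := hcover b hb
    rw [hS, Finset.mem_filter] at this
    obtain ⟨-, t, htT, hc⟩ := this
    rw [Finset.mem_biUnion]
    refine ⟨t, htT, ?_⟩
    rcases hc with rfl | hnb
    · exact Finset.mem_insert_self _ _
    · exact Finset.mem_insert_of_mem hnb
  calc B.card ≤ (T.biUnion (fun t => insert t (nbrs vbl t))).card := Finset.card_le_card hsub
    _ ≤ ∑ t ∈ T, (insert t (nbrs vbl t)).card := Finset.card_biUnion_le
    _ ≤ ∑ _t ∈ T, (Δ + 1) := by
        apply Finset.sum_le_sum
        intro t _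
        calc (insert t (nbrs vbl t)).card ≤ (nbrs vbl t).card + 1 :=
              Finset.card_insert_le _ _
          _ ≤ Δ + 1 := by have := hdeg t; omega
    _ = T.card * (Δ + 1) := by rw [Finset.sum_const, smul_eq_mul]

end E2


section E3
variable {m : ℕ} (HA : Fin m → Fin m → Prop)

noncomputable def nbF (v : Fin m) : Finset (Fin m) := Finset.univ.filter fun k => HA v k

noncomputable def nbList (v : Fin m) : List (Fin m) := (nbF HA v).sort (· ≤ ·)

lemma mem_nbList {v k : Fin m} : k ∈ nbList HA v ↔ HA v k := by
  simp [nbList, Finset.mem_sort, nbF]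

lemma length_nbList (v : Fin m) : (nbList HA v).length = (nbF HA v).card := by
  simp [nbList]

noncomputable def dfs : Finset (Fin m) → List (Fin m) → List (Option ℕ) × Finset (Fin m)
  | _, [] => ([], ∅)
  | U, cur :: rest =>
    if h : (U ∩ nbF HA cur).Nonempty then
      have hx : (U ∩ nbF HA cur).min' h ∈ U :=
        (Finset.mem_inter.mp ((U ∩ nbF HA cur).min'_mem h)).1
      let p := dfs (U.erase ((U ∩ nbF HA cur).min' h)) ((U ∩ nbF HA cur).min' h :: cur :: rest)
      (some ((nbList HA cur).idxOf ((U ∩ nbF HA cur).min' h)) :: p.1,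
        insert ((U ∩ nbF HA cur).min' h) p.2)
    else
      let p := dfs U rest
      (none :: p.1, p.2)
termination_by U l => (U.card, l.length)
decreasing_by
  · exact Prod.Lex.left _ _ (Finset.card_erase_lt_of_mem hx)
  · exact Prod.Lex.right _ (Nat.lt_succ_self _)

end E3


noncomputable def dec {m : ℕ} (HA : Fin m → Fin m → Prop) :
    List (Option ℕ) → List (Fin m) → Finset (Fin m) → Finset (Fin m)
  | [], _, vis => vis
  | some k :: w, cur :: rest, vis =>
      match (nbList HA cur)[k]? with
      | some v => dec HA w (v :: cur :: rest) (insert v vis)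
      | none => vis
  | some _ :: _, [], vis => vis
  | none :: w, _ :: rest, vis => dec HA w rest vis
  | none :: _, [], vis => vis

section E4
variable {m : ℕ} {HA : Fin m → Fin m → Prop}

lemma dfs_snd_subset : ∀ (U : Finset (Fin m)) (stack : List (Fin m)),
    (dfs HA U stack).2 ⊆ U := by
  intro U stack
  induction U, stack using dfs.induct HA with
  | case1 => simp [dfs]
  | case2 U cur rest h hx ih =>
    rw [dfs]
    simp only [dif_pos h]
    intro y hy
    rcases Finset.mem_insert.mp hy with rfl | hy'
    · exact hx
    · exact Finset.mem_of_mem_erase (ih hy')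
  | case3 U cur rest h ih =>
    rw [dfs]
    simp only [dif_neg h]
    exact ih

end E4


inductive Reaches {m : ℕ} (HA : Fin m → Fin m → Prop) (U : Finset (Fin m)) :
    Fin m → Fin m → Prop
  | single {s x} : HA s x → x ∈ U → Reaches HA U s x
  | cons {s y x} : HA s y → y ∈ U → Reaches HA U y x → Reaches HA U s x

section E5
variable {m : ℕ} {HA : Fin m → Fin m → Prop}

lemma Reaches.mem {U : Finset (Fin m)} {s x : Fin m} (h : Reaches HA U s x) : x ∈ U := by
  induction h with
  | single _ hx => exact hx
  | cons _ _ _ ih => exact ih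

lemma Reaches.mono {U U' : Finset (Fin m)} (hUU : U ⊆ U') {s x : Fin m}
    (h : Reaches HA U s x) : Reaches HA U' s x := by
  induction h with
  | single h1 h2 => exact Reaches.single h1 (hUU h2)
  | cons h1 h2 _ ih => exact Reaches.cons h1 (hUU h2) ih

lemma Reaches.snoc {U : Finset (Fin m)} {s t : Fin m} (h : Reaches HA U s t) :
    ∀ {x : Fin m}, HA t x → x ∈ U → Reaches HA U s x := by
  induction h with
  | single h1 h2 => exact fun ht hx => Reaches.cons h1 h2 (Reaches.single ht hx)
  | cons h1 h2 _ ih => exact fun ht hx => Reaches.cons h1 h2 (ih ht hx)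

lemma Reaches.erase_or {U : Finset (Fin m)} {s x z : Fin m} (h : Reaches HA U s x)
    (hxz : x ≠ z) : Reaches HA (U.erase z) s x ∨ Reaches HA (U.erase z) z x := by
  induction h with
  | single h1 h2 => exact Or.inl (Reaches.single h1 (Finset.mem_erase.mpr ⟨hxz, h2⟩))
  | @cons s' y' x' h1 h2 _ ih =>
    rcases ih hxz with h3 | h3
    · rcases eq_or_ne y' z with rfl | hyz
      · exact Or.inr h3
      · exact Or.inl (Reaches.cons h1 (Finset.mem_erase.mpr ⟨hyz, h2⟩) h3)
    · exact Or.inr h3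

lemma linked_reaches {j₀ : Fin m} {T : Finset (Fin m)} (h : Linked HA j₀ T) :
    ∀ x ∈ T, x ≠ j₀ → Reaches HA (T.erase j₀) j₀ x := by
  induction h with
  | base =>
    intro x hx hne
    rw [Finset.mem_singleton] at hx
    exact absurd hx hne
  | @step T t y hT htT hadj hyT ih =>
    have hsub : T.erase j₀ ⊆ (insert y T).erase j₀ :=
      Finset.erase_subset_erase _ (Finset.subset_insert _ _)
    intro x hx hne
    rcases Finset.mem_insert.mp hx with rfl | hxT
    · have hxU : x ∈ (insert x T).erase j₀ :=
        Finset.mem_erase.mpr ⟨hne, Finset.mem_insert_self _ _⟩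
      rcases eq_or_ne t j₀ with rfl | htne
      · exact Reaches.single hadj hxU
      · exact Reaches.snoc ((ih t htT htne).mono hsub) hadj hxU
    · exact (ih x hxT hne).mono hsub

lemma dfs_length : ∀ (U : Finset (Fin m)) (stack : List (Fin m)),
    (dfs HA U stack).1.length = 2 * (dfs HA U stack).2.card + stack.length := by
  intro U stack
  induction U, stack using dfs.induct HA with
  | case1 => simp [dfs]
  | case2 U cur rest h hx ih =>
    rw [dfs]
    simp only [dif_pos h, List.length_cons]
    have hnm : (U ∩ nbF HA cur).min' h ∉
        (dfs HA (U.erase ((U ∩ nbF HA cur).min' h))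
          ((U ∩ nbF HA cur).min' h :: cur :: rest)).2 := by
      intro hc
      exact absurd (Finset.mem_erase.mp (dfs_snd_subset _ _ hc)).1 (by simp)
    rw [Finset.card_insert_of_notMem hnm]
    rw [ih]
    simp only [List.length_cons]
    omega
  | case3 U cur rest h ih =>
    rw [dfs]
    simp only [dif_neg h, List.length_cons]
    rw [ih]
    omega

lemma dfs_labels_length : ∀ (U : Finset (Fin m)) (stack : List (Fin m)),
    ((dfs HA U stack).1.filterMap id).length = (dfs HA U stack).2.card := by
  intro U stack
  induction U, stack using dfs.induct HA with
  | case1 => simp [dfs]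
  | case2 U cur rest h hx ih =>
    rw [dfs]
    simp only [dif_pos h, List.filterMap_cons]
    have hnm : (U ∩ nbF HA cur).min' h ∉
        (dfs HA (U.erase ((U ∩ nbF HA cur).min' h))
          ((U ∩ nbF HA cur).min' h :: cur :: rest)).2 := by
      intro hc
      exact absurd (Finset.mem_erase.mp (dfs_snd_subset _ _ hc)).1 (by simp)
    rw [Finset.card_insert_of_notMem hnm]
    simp only [id]
    rw [List.length_cons]; exact congrArg (· + 1) ih
  | case3 U cur rest h ih =>
    rw [dfs]
    simp only [dif_neg h, List.filterMap_cons]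
    simp only [id]
    exact ih

lemma dfs_labels_lt {D : ℕ} (hD : ∀ v, (nbF HA v).card ≤ D) :
    ∀ (U : Finset (Fin m)) (stack : List (Fin m)),
    ∀ k ∈ (dfs HA U stack).1.filterMap id, k < D := by
  intro U stack
  induction U, stack using dfs.induct HA with
  | case1 => simp [dfs]
  | case2 U cur rest h hx ih =>
    rw [dfs]
    simp only [dif_pos h, List.filterMap_cons, id]
    intro k hk
    rcases List.mem_cons.mp hk with rfl | hk'
    · have hmem : (U ∩ nbF HA cur).min' h ∈ nbList HA cur := by
        rw [mem_nbList]
        have := (Finset.mem_inter.mp ((U ∩ nbF HA cur).min'_mem h)).2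
        simpa [nbF] using this
      calc (nbList HA cur).idxOf ((U ∩ nbF HA cur).min' h) < (nbList HA cur).length :=
            List.idxOf_lt_length_iff.mpr hmem
        _ ≤ D := by rw [length_nbList]; exact hD cur
    · exact ih k hk'
  | case3 U cur rest h ih =>
    rw [dfs]
    simp only [dif_neg h, List.filterMap_cons, id]
    exact ih

lemma dfs_roundtrip : ∀ (U : Finset (Fin m)) (stack : List (Fin m)) (vis : Finset (Fin m)),
    dec HA (dfs HA U stack).1 stack vis = vis ∪ (dfs HA U stack).2 := by
  intro U stack
  induction U, stack using dfs.induct HA with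
  | case1 => intro vis; simp [dfs, dec]
  | case2 U cur rest h hx ih =>
    intro vis
    rw [dfs]
    simp only [dif_pos h]
    have hmem : (U ∩ nbF HA cur).min' h ∈ nbList HA cur := by
      rw [mem_nbList]
      have := (Finset.mem_inter.mp ((U ∩ nbF HA cur).min'_mem h)).2
      simpa [nbF] using this
    rw [dec]
    rw [List.getElem?_idxOf hmem]
    simp only []
    rw [ih]
    rw [Finset.insert_union, Finset.union_insert]
  | case3 U cur rest h ih =>
    intro vis
    rw [dfs]
    simp only [dif_neg h]
    rw [dec]
    exact ih vis

lemma dfs_complete : ∀ (U : Finset (Fin m)) (stack : List (Fin m)),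
    ∀ x ∈ U, (∃ s ∈ stack, Reaches HA U s x) → x ∈ (dfs HA U stack).2 := by
  intro U stack
  induction U, stack using dfs.induct HA with
  | case1 =>
    intro x _ ⟨s, hs, _⟩
    exact absurd hs List.not_mem_nil
  | case2 U cur rest h hx ih =>
    set x₀ := (U ∩ nbF HA cur).min' h with hx₀
    intro x hxU ⟨s, hs, hreach⟩
    rw [dfs]
    simp only [dif_pos h]
    rcases eq_or_ne x x₀ with rfl | hne
    · exact Finset.mem_insert_self _ _
    · apply Finset.mem_insert_of_mem
      have hxU' : x ∈ U.erase x₀ := Finset.mem_erase.mpr ⟨hne, hxU⟩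
      rcases hreach.erase_or hne with h3 | h3
      · exact ih x hxU' ⟨s, List.mem_cons_of_mem _ hs, h3⟩
      · exact ih x hxU' ⟨x₀, List.mem_cons_self, h3⟩
  | case3 U cur rest h ih =>
    intro x hxU ⟨s, hs, hreach⟩
    rw [dfs]
    simp only [dif_neg h]
    rcases List.mem_cons.mp hs with rfl | hs'
    · -- a reach from cur must enter U ∩ nbF cur, which is empty
      exfalso
      cases hreach with
      | @single s' x' h1 h2 =>
        exact h ⟨x, Finset.mem_inter.mpr ⟨h2, by simp [nbF, h1]⟩⟩
      | @cons s' y' x' h1 h2 h3 =>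
        exact h ⟨y', Finset.mem_inter.mpr ⟨h2, by simp [nbF, h1]⟩⟩
    · exact ih x hxU ⟨s, hs', hreach⟩

end E5


section E6
variable {m : ℕ} {HA : Fin m → Fin m → Prop}

lemma words_inj : ∀ (w w' : List (Option ℕ)),
    w.map Option.isSome = w'.map Option.isSome → w.filterMap id = w'.filterMap id → w = w' := by
  intro w
  induction w with
  | nil =>
    intro w' h1 _
    cases w' with
    | nil => rfl
    | cons o' t' => simp at h1
  | cons o t ih =>
    intro w' h1 h2
    cases w' with
    | nil => simp at h1
    | cons o' t' =>
      simp only [List.map_cons, List.cons.injEq] at h1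
      obtain ⟨ho, ht⟩ := h1
      cases o with
      | none =>
        cases o' with
        | none =>
          simp only [List.filterMap_cons, id] at h2
          rw [ih t' ht h2]
        | some k => simp at ho
      | some k =>
        cases o' with
        | none => simp at ho
        | some k' =>
          simp only [List.filterMap_cons, id] at h2
          injection h2 with hk htt
          subst hk
          rw [ih t' ht htt]

lemma linked_card_one (j₀ : Fin m) {T : Finset (Fin m)} (h : Linked HA j₀ T)
    (hc : T.card = 1) : T = {j₀} := by
  obtain ⟨a, ha⟩ := Finset.card_eq_one.mp hc
  have := h.root_mem
  rw [ha] at this ⊢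
  rw [Finset.mem_singleton] at this
  rw [this]

lemma card_linked_one (j₀ : Fin m) :
    (Finset.univ.filter fun T : Finset (Fin m) => Linked HA j₀ T ∧ T.card = 1).card ≤ 1 := by
  apply Finset.card_le_one.mpr
  intro T hT T' hT'
  rw [Finset.mem_filter] at hT hT'
  rw [linked_card_one j₀ hT.2.1 hT.2.2, linked_card_one j₀ hT'.2.1 hT'.2.2]

lemma card_linked_le {D : ℕ} (hD : ∀ v, (nbF HA v).card ≤ D) (j₀ : Fin m) {r : ℕ}
    (hr : 1 ≤ r) :
    (Finset.univ.filter fun T : Finset (Fin m) => Linked HA j₀ T ∧ T.card = r).card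
      ≤ 2 ^ (2 * r - 1) * D ^ (r - 1) := by
  classical
  set W : Finset (Fin m) → List (Option ℕ) := fun T => (dfs HA (T.erase j₀) [j₀]).1 with hW
  have hvis : ∀ T : Finset (Fin m), Linked HA j₀ T →
      (dfs HA (T.erase j₀) [j₀]).2 = T.erase j₀ := by
    intro T hT
    apply Finset.Subset.antisymm (dfs_snd_subset _ _)
    intro x hx
    obtain ⟨hne, hxT⟩ := Finset.mem_erase.mp hx
    exact dfs_complete _ _ x hx ⟨j₀, List.mem_singleton_self _, linked_reaches hT x hxT hne⟩
  have hdecT : ∀ T : Finset (Fin m), Linked HA j₀ T →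
      dec HA (W T) [j₀] {j₀} = T := by
    intro T hT
    rw [hW]
    rw [dfs_roundtrip (T.erase j₀) [j₀] {j₀}, hvis T hT]
    ext y
    simp only [Finset.mem_union, Finset.mem_singleton, Finset.mem_erase]
    constructor
    · rintro (rfl | ⟨_, hy⟩)
      · exact hT.root_mem
      · exact hy
    · intro hy
      rcases eq_or_ne y j₀ with rfl | hne
      · exact Or.inl rfl
      · exact Or.inr ⟨hne, hy⟩
  have hlen : ∀ T : Finset (Fin m), Linked HA j₀ T → T.card = r →
      (W T).length = 2 * (r - 1) + 1 := by
    intro T hT hc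
    rw [hW]
    rw [dfs_length (T.erase j₀) [j₀], hvis T hT,
      Finset.card_erase_of_mem hT.root_mem, hc]
    simp
  have hlab : ∀ T : Finset (Fin m), Linked HA j₀ T → T.card = r →
      ((W T).filterMap id).length = r - 1 := by
    intro T hT hc
    rw [hW, dfs_labels_length (T.erase j₀) [j₀], hvis T hT,
      Finset.card_erase_of_mem hT.root_mem, hc]
  have hlt : ∀ T : Finset (Fin m), ∀ k ∈ (W T).filterMap id, k < D :=
    fun T => dfs_labels_lt hD _ _
  set tgt := (Finset.univ : Finset (Fin (2 * (r - 1) + 1) → Bool)) ×ˢ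
      Fintype.piFinset (fun _ : Fin (r - 1) => Finset.range D) with htgt
  have hinj : (Finset.univ.filter fun T : Finset (Fin m) =>
      Linked HA j₀ T ∧ T.card = r).card ≤ tgt.card := by
    apply Finset.card_le_card_of_injOn
      (fun T => (fun i : Fin (2 * (r - 1) + 1) => ((W T).getD i.1 none).isSome,
        fun i : Fin (r - 1) => ((W T).filterMap id).getD i.1 0))
    · intro T hT
      rw [Finset.mem_coe, Finset.mem_filter] at hT
      obtain ⟨-, hTl, hTc⟩ := hT
      rw [htgt, Finset.mem_coe, Finset.mem_product]
      refine ⟨Finset.mem_univ _, ?_⟩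
      rw [Fintype.mem_piFinset]
      intro i
      rw [Finset.mem_range]
      have hi : i.1 < ((W T).filterMap id).length := by rw [hlab T hTl hTc]; exact i.2
      dsimp only
      rw [List.getD_eq_getElem _ _ hi]
      exact hlt T _ (List.getElem_mem hi)
    · intro T hT T' hT' heq
      rw [Finset.coe_filter, Set.mem_setOf_eq] at hT hT'
      obtain ⟨-, hTl, hTc⟩ := hT
      obtain ⟨-, hTl', hTc'⟩ := hT'
      have h1 : (W T).map Option.isSome = (W T').map Option.isSome := by
        apply List.ext_getElem
        · rw [List.length_map, List.length_map, hlen T hTl hTc, hlen T' hTl' hTc']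
        · intro i hi1 hi2
          rw [List.length_map, hlen T hTl hTc] at hi1
          rw [List.getElem_map, List.getElem_map]
          have e1 := congrFun (congrArg Prod.fst heq) ⟨i, hi1⟩
          simp only at e1
          rwa [List.getD_eq_getElem _ _ (by rw [hlen T hTl hTc]; exact hi1),
            List.getD_eq_getElem _ _ (by rw [hlen T' hTl' hTc']; exact hi1)] at e1
      have h2 : (W T).filterMap id = (W T').filterMap id := by
        apply List.ext_getElem
        · rw [hlab T hTl hTc, hlab T' hTl' hTc']
        · intro i hi1 hi2
          rw [hlab T hTl hTc] at hi1
          have e2 := congrFun (congrArg Prod.snd heq) ⟨i, hi1⟩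
          simp only at e2
          rwa [List.getD_eq_getElem _ _ (by rw [hlab T hTl hTc]; exact hi1),
            List.getD_eq_getElem _ _ (by rw [hlab T' hTl' hTc']; exact hi1)] at e2
      have hww : W T = W T' := words_inj _ _ h1 h2
      rw [← hdecT T hTl, ← hdecT T' hTl', hww]
  calc (Finset.univ.filter fun T : Finset (Fin m) =>
      Linked HA j₀ T ∧ T.card = r).card ≤ tgt.card := hinj
    _ = 2 ^ (2 * r - 1) * D ^ (r - 1) := by
      rw [htgt, Finset.card_product, Finset.card_univ, Fintype.card_fun,
        Fintype.card_piFinset]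
      simp only [Finset.card_range, Finset.prod_const, Finset.card_univ, Fintype.card_fin,
        Fintype.card_bool]
      congr 1
      congr 1
      omega

end E6


section F1
variable {n m : ℕ}

lemma card_effective_le {vbl : Fin m → Finset (Fin n)} {Δ : ℕ}
    (hdeg : ∀ i, (nbrs vbl i).card ≤ Δ) :
    (Finset.univ.filter fun j : Fin m => (vbl j).Nonempty).card ≤ n * (Δ + 1) := by
  classical
  rcases Nat.eq_zero_or_pos n with rfl | hn
  · have he : (Finset.univ.filter fun j : Fin m => (vbl j).Nonempty) = ∅ := by
      apply Finset.filter_false_of_mem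
      intro j _ ⟨v, _⟩
      exact v.elim0
    rw [he]
    simp
  · set f : Fin m → Fin n := fun j =>
      if h : (vbl j).Nonempty then (vbl j).min' h else ⟨0, hn⟩ with hf
    set s := Finset.univ.filter fun j : Fin m => (vbl j).Nonempty with hs
    have hmem : ∀ j ∈ s, f j ∈ vbl j := by
      intro j hj
      rw [hs, Finset.mem_filter] at hj
      rw [hf]
      simp only [dif_pos hj.2]
      exact (vbl j).min'_mem hj.2
    have hfib : ∀ a ∈ s.image f, (s.filter fun j => f j = a).card ≤ Δ + 1 := by
      intro a ha
      obtain ⟨j₀, hj₀s, hj₀a⟩ := Finset.mem_image.mp ha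
      have hsub : (s.filter fun j => f j = a) ⊆ insert j₀ (nbrs vbl j₀) := by
        intro j hj
        rw [Finset.mem_filter] at hj
        obtain ⟨hjs, hja⟩ := hj
        rcases eq_or_ne j j₀ with rfl | hne
        · exact Finset.mem_insert_self _ _
        · apply Finset.mem_insert_of_mem
          rw [mem_nbrs]
          refine ⟨hne, ⟨a, Finset.mem_inter.mpr ⟨?_, ?_⟩⟩⟩
          · rw [← hj₀a]; exact hmem j₀ hj₀s
          · rw [← hja]; exact hmem j hjs
      calc (s.filter fun j => f j = a).card ≤ (insert j₀ (nbrs vbl j₀)).card :=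
            Finset.card_le_card hsub
        _ ≤ (nbrs vbl j₀).card + 1 := Finset.card_insert_le _ _
        _ ≤ Δ + 1 := by have := hdeg j₀; omega
    calc s.card ≤ (Δ + 1) * (s.image f).card := Finset.card_le_mul_card_image s (Δ + 1) hfib
      _ ≤ (Δ + 1) * n := by
          apply Nat.mul_le_mul_left
          calc (s.image f).card ≤ (Finset.univ : Finset (Fin n)).card := Finset.card_le_card
                (Finset.subset_univ _)
            _ = n := by simp
      _ = n * (Δ + 1) := Nat.mul_comm _ _

end F1


section G1

lemma g_le {Δ : ℕ} (hΔ : 1 ≤ Δ) :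
    (2 : ℝ) ^ ((((Δ : ℝ)) + 1) / (Δ : ℝ)) ≤ 2 * ((Δ : ℝ) + 1) / Δ := by
  have hd : (0 : ℝ) < (Δ : ℝ) := by exact_mod_cast hΔ
  have hdne : (Δ : ℝ) ≠ 0 := hd.ne'
  have hsplit : (((Δ : ℝ)) + 1) / (Δ : ℝ) = 1 + 1 / (Δ : ℝ) := by field_simp
  have hy : (0 : ℝ) < 1 + 1 / (Δ : ℝ) := by positivity
  have hber : (2 : ℝ) ≤ (1 + 1 / (Δ : ℝ)) ^ (Δ : ℕ) := by
    have := one_add_mul_le_pow (a := 1 / (Δ : ℝ)) (le_trans (by norm_num : (-2:ℝ) ≤ 0) (by positivity)) Δ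
    have h1 : (Δ : ℝ) * (1 / (Δ : ℝ)) = 1 := by field_simp
    rw [h1] at this
    linarith
  have hpow : ((2 : ℝ) ^ ((1 : ℝ) / (Δ : ℝ))) ^ (Δ : ℕ) = 2 := by
    rw [← Real.rpow_natCast ((2 : ℝ) ^ ((1 : ℝ) / (Δ : ℝ))) Δ, ← Real.rpow_mul (by norm_num)]
    rw [show (1 : ℝ) / (Δ : ℝ) * (Δ : ℕ) = 1 by field_simp]
    exact Real.rpow_one 2
  have hle : (2 : ℝ) ^ ((1 : ℝ) / (Δ : ℝ)) ≤ 1 + 1 / (Δ : ℝ) := by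
    apply le_of_pow_le_pow_left₀ (by omega : Δ ≠ 0) (le_of_lt hy)
    rw [hpow]
    exact hber
  calc (2 : ℝ) ^ ((((Δ : ℝ)) + 1) / (Δ : ℝ))
      = 2 ^ ((1 : ℝ) + 1 / (Δ : ℝ)) := by rw [hsplit]
    _ = 2 ^ (1 : ℝ) * 2 ^ ((1 : ℝ) / (Δ : ℝ)) := Real.rpow_add (by norm_num) _ _
    _ = 2 * 2 ^ ((1 : ℝ) / (Δ : ℝ)) := by rw [Real.rpow_one]
    _ ≤ 2 * (1 + 1 / (Δ : ℝ)) := by linarith [hle]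
    _ = 2 * ((Δ : ℝ) + 1) / Δ := by field_simp

lemma nat_key (Δ : ℕ) (hΔ : 1 ≤ Δ) :
    ∀ r : ℕ, 2 ≤ r →
      (Δ + 1) * 2 ^ (2 * r - 1) * (Δ * Δ * (Δ - 1)) ^ (r - 1) * (2 * (Δ + 1)) ^ r
        ≤ Δ * (10 * Δ ^ 3) ^ r * Δ ^ r := by
  intro r hr
  induction r with
  | zero => omega
  | succ s ih =>
    rcases Nat.lt_or_ge s 2 with hs | hs
    · -- base case : s + 1 = 2, i.e. s = 1
      have hs1 : s = 1 := by omega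
      subst hs1
      rcases Nat.lt_or_ge Δ 2 with hΔ1 | hΔ2
      · have : Δ = 1 := by omega
        subst this
        norm_num
      · have h8 : 8 ≤ Δ ^ 3 := by
          calc (8 : ℕ) = 2 ^ 3 := by norm_num
            _ ≤ Δ ^ 3 := Nat.pow_le_pow_left hΔ2 3
        have hΔ1le : Δ + 1 ≤ 2 * Δ := by omega
        have hΔm1 : Δ - 1 ≤ Δ := by omega
        calc (Δ + 1) * 2 ^ (2 * 2 - 1) * (Δ * Δ * (Δ - 1)) ^ (2 - 1) * (2 * (Δ + 1)) ^ 2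
            = 32 * ((Δ + 1) * (Δ + 1) * (Δ + 1)) * (Δ * Δ) * (Δ - 1) := by ring_nf
          _ ≤ 32 * ((2 * Δ) * (2 * Δ) * (2 * Δ)) * (Δ * Δ) * Δ := by gcongr
          _ = 256 * Δ ^ 6 := by ring
          _ ≤ (100 * Δ ^ 3) * Δ ^ 6 := by
              apply Nat.mul_le_mul_right
              omega
          _ = Δ * (10 * Δ ^ 3) ^ 2 * Δ ^ 2 := by ring_nf
    · -- inductive step
      have ihs := ih hs
      have hfac : 4 * (Δ * Δ * (Δ - 1)) * (2 * (Δ + 1)) ≤ (10 * Δ ^ 3) * Δ := by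
        have hq : (Δ - 1) * (Δ + 1) ≤ Δ * Δ := by
          rcases Nat.exists_eq_add_of_le hΔ with ⟨e, rfl⟩
          simp only [Nat.add_sub_cancel_left]
          nlinarith
        calc 4 * (Δ * Δ * (Δ - 1)) * (2 * (Δ + 1)) = 8 * (Δ * Δ) * ((Δ - 1) * (Δ + 1)) := by
              ring
          _ ≤ 8 * (Δ * Δ) * (Δ * Δ) := Nat.mul_le_mul_left _ hq
          _ ≤ 10 * (Δ * Δ) * (Δ * Δ) := by
              apply Nat.mul_le_mul_right
              omega
          _ = (10 * Δ ^ 3) * Δ := by ring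
      have he1 : 2 ^ (2 * (s + 1) - 1) = 2 ^ (2 * s - 1) * 4 := by
        rw [show 2 * (s + 1) - 1 = (2 * s - 1) + 2 by omega, pow_add]
        norm_num
      have he2 : (Δ * Δ * (Δ - 1)) ^ (s + 1 - 1) = (Δ * Δ * (Δ - 1)) ^ (s - 1) *
          (Δ * Δ * (Δ - 1)) := by
        rw [show s + 1 - 1 = (s - 1) + 1 by omega, pow_succ]
      have he3 : (2 * (Δ + 1)) ^ (s + 1) = (2 * (Δ + 1)) ^ s * (2 * (Δ + 1)) := pow_succ _ _
      have he4 : (10 * Δ ^ 3) ^ (s + 1) = (10 * Δ ^ 3) ^ s * (10 * Δ ^ 3) := pow_succ _ _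
      have he5 : Δ ^ (s + 1) = Δ ^ s * Δ := pow_succ _ _
      calc (Δ + 1) * 2 ^ (2 * (s + 1) - 1) * (Δ * Δ * (Δ - 1)) ^ (s + 1 - 1) *
            (2 * (Δ + 1)) ^ (s + 1)
          = ((Δ + 1) * 2 ^ (2 * s - 1) * (Δ * Δ * (Δ - 1)) ^ (s - 1) * (2 * (Δ + 1)) ^ s) *
            (4 * (Δ * Δ * (Δ - 1)) * (2 * (Δ + 1))) := by
            rw [he1, he2, he3]; ring
        _ ≤ (Δ * (10 * Δ ^ 3) ^ s * Δ ^ s) * ((10 * Δ ^ 3) * Δ) :=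
            Nat.mul_le_mul ihs hfac
        _ = Δ * (10 * Δ ^ 3) ^ (s + 1) * Δ ^ (s + 1) := by
            rw [he4, he5]; ring

end G1


section G2

lemma numeric_main (Δ r : ℕ) (hΔ : 1 ≤ Δ) (hr : 1 ≤ r) (c : ℝ) (hc0 : 0 ≤ c)
    (hcnt : c ≤ if r = 1 then 1 else
      2 ^ (2 * r - 1) * ((Δ * Δ * (Δ - 1) : ℕ) : ℝ) ^ (r - 1))
    (w : ℝ) (hw0 : 0 ≤ w) (hw : w ≤ 1 / (10 * (Δ : ℝ) ^ 3))
    (L : ℝ) (hL0 : 0 ≤ L) (hLr : L ≤ r * ((Δ : ℝ) + 1)) :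
    ((Δ : ℝ) + 1) * c * w ^ r ≤ (Δ : ℝ) * (2 : ℝ) ^ (-(L / (Δ : ℝ))) := by
  have hd : (0 : ℝ) < (Δ : ℝ) := by exact_mod_cast hΔ
  set g : ℝ := (2 : ℝ) ^ ((((Δ : ℝ)) + 1) / (Δ : ℝ)) with hg
  have hgpos : 0 < g := Real.rpow_pos_of_pos (by norm_num) _
  have step1 : (g⁻¹) ^ r ≤ (2 : ℝ) ^ (-(L / (Δ : ℝ))) := by
    have e1 : (g⁻¹) ^ r = (2 : ℝ) ^ (-((r : ℝ) * ((Δ : ℝ) + 1) / (Δ : ℝ))) := by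
      rw [hg, ← Real.rpow_neg (by norm_num : (0:ℝ) ≤ 2),
        ← Real.rpow_natCast ((2:ℝ) ^ (-((((Δ : ℝ)) + 1) / (Δ : ℝ)))) r,
        ← Real.rpow_mul (by norm_num : (0:ℝ) ≤ 2)]
      congr 1
      ring
    rw [e1]
    apply Real.rpow_le_rpow_of_exponent_le one_le_two
    rw [neg_le_neg_iff]
    gcongr
  have hXpos : (0:ℝ) < (10 * (Δ : ℝ) ^ 3) ^ r := by positivity
  have hgrpos : (0:ℝ) < g ^ r := by positivity
  have hwpow : w ^ r ≤ (1 / (10 * (Δ : ℝ) ^ 3)) ^ r := pow_le_pow_left₀ hw0 hw r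
  have hbig : ((Δ : ℝ) + 1) * c * g ^ r ≤ (Δ : ℝ) * (10 * (Δ : ℝ) ^ 3) ^ r := by
    rcases eq_or_ne r 1 with rfl | hr1
    · rw [if_pos rfl] at hcnt
      have hgle := g_le hΔ
      have h1 : (1:ℝ) ≤ (Δ:ℝ) := by exact_mod_cast hΔ
      have hc1 : ((Δ : ℝ) + 1) * c * g ^ 1 ≤ ((Δ : ℝ) + 1) * (2 * ((Δ : ℝ) + 1) / Δ) := by
        rw [pow_one]
        calc ((Δ : ℝ) + 1) * c * g ≤ ((Δ : ℝ) + 1) * 1 * g := by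
              apply mul_le_mul_of_nonneg_right ?_ hgpos.le
              apply mul_le_mul_of_nonneg_left hcnt (by positivity)
          _ = ((Δ : ℝ) + 1) * g := by ring
          _ ≤ ((Δ : ℝ) + 1) * (2 * ((Δ : ℝ) + 1) / Δ) :=
              mul_le_mul_of_nonneg_left hgle (by positivity)
      have heq : ((Δ : ℝ) + 1) * (2 * ((Δ : ℝ) + 1) / Δ) = 2 * ((Δ:ℝ)+1)^2 / Δ := by ring
      have hc3 : 2 * ((Δ:ℝ)+1)^2 / Δ ≤ (Δ : ℝ) * (10 * (Δ : ℝ) ^ 3) ^ 1 := by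
        rw [pow_one, div_le_iff₀ hd]
        have h5 : ((Δ : ℝ)) ^ 2 ≤ (Δ : ℝ) ^ 5 :=
          pow_le_pow_right₀ h1 (by norm_num)
        nlinarith
      calc ((Δ : ℝ) + 1) * c * g ^ 1 ≤ 2 * ((Δ:ℝ)+1)^2 / Δ := by rw [← heq]; exact hc1
        _ ≤ (Δ : ℝ) * (10 * (Δ : ℝ) ^ 3) ^ 1 := hc3
    · rw [if_neg hr1] at hcnt
      have hr2 : 2 ≤ r := by omega
      have hgle := g_le hΔ
      have hkeyR : ((Δ:ℝ) + 1) * 2 ^ (2 * r - 1) * ((Δ * Δ * (Δ - 1) : ℕ) : ℝ) ^ (r - 1)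
          * (2 * ((Δ:ℝ) + 1)) ^ r ≤ (Δ:ℝ) * (10 * (Δ:ℝ) ^ 3) ^ r * (Δ:ℝ) ^ r := by
        exact_mod_cast nat_key Δ hΔ r hr2
      have hgr : g ^ r ≤ (2 * ((Δ:ℝ) + 1)) ^ r / (Δ:ℝ) ^ r := by
        rw [← div_pow]
        exact pow_le_pow_left₀ hgpos.le hgle r
      calc ((Δ : ℝ) + 1) * c * g ^ r
          ≤ ((Δ : ℝ) + 1) * (2 ^ (2 * r - 1) * ((Δ * Δ * (Δ - 1) : ℕ) : ℝ) ^ (r - 1))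
            * ((2 * ((Δ:ℝ) + 1)) ^ r / (Δ:ℝ) ^ r) := by
            apply mul_le_mul (by gcongr) hgr hgrpos.le (by positivity)
        _ = (((Δ:ℝ) + 1) * 2 ^ (2 * r - 1) * ((Δ * Δ * (Δ - 1) : ℕ) : ℝ) ^ (r - 1)
            * (2 * ((Δ:ℝ) + 1)) ^ r) / (Δ:ℝ) ^ r := by ring
        _ ≤ ((Δ:ℝ) * (10 * (Δ:ℝ) ^ 3) ^ r * (Δ:ℝ) ^ r) / (Δ:ℝ) ^ r := by gcongr
        _ = (Δ : ℝ) * (10 * (Δ:ℝ) ^ 3) ^ r := by field_simp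
  have main : ((Δ : ℝ) + 1) * c * w ^ r ≤ (Δ : ℝ) * (g⁻¹) ^ r := by
    calc ((Δ : ℝ) + 1) * c * w ^ r
        ≤ ((Δ : ℝ) + 1) * c * (1 / (10 * (Δ : ℝ) ^ 3)) ^ r := by
          apply mul_le_mul_of_nonneg_left hwpow (by positivity)
      _ = (((Δ : ℝ) + 1) * c) / (10 * (Δ : ℝ) ^ 3) ^ r := by
          rw [div_pow, one_pow]
          ring
      _ ≤ (Δ : ℝ) / g ^ r := by
          rw [div_le_div_iff₀ hXpos hgrpos]
          exact hbig
      _ = (Δ : ℝ) * (g⁻¹) ^ r := by rw [inv_pow, div_eq_mul_inv]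
  calc ((Δ : ℝ) + 1) * c * w ^ r ≤ (Δ : ℝ) * (g⁻¹) ^ r := main
    _ ≤ (Δ : ℝ) * (2 : ℝ) ^ (-(L / (Δ : ℝ))) := mul_le_mul_of_nonneg_left step1 hd.le

end G2


/-- If each constraint shares a variable with at most `Δ` other constraints, `ℙ[C] ≤ p`
for every constraint, and `p ≤ p'/(10Δ³)`, then for every `L ≥ 0` the `ν`-probability that
the graph `G²(ℱ)` (the subgraph of `G²(𝒞)` induced by the dangerous constraints `ℱ`) has a
connected component of size at least `L` — equivalently, that there exists `B ⊆ ℱ` with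
`|B| ≥ L` inducing a connected subgraph of `G²(𝒞)` — is at most `n·Δ·2^(−L/Δ)`. -/
theorem dangerous_small_components {n q m : ℕ} (hq : 0 < q)
    (vbl : Fin m → Finset (Fin n)) (viol : Fin m → (Fin n → Fin q) → Prop)
    (hdep : ∀ j (σ τ : Fin n → Fin q), (∀ v ∈ vbl j, σ v = τ v) → (viol j σ ↔ viol j τ))
    (Δ : ℕ) (hΔ : 1 ≤ Δ)
    (hdeg : ∀ i : Fin m,
      ((Finset.univ.filter fun j => j ≠ i ∧ (vbl i ∩ vbl j).Nonempty).card : ℝ) ≤ Δ)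
    (p' : ℝ) (hp' : p' ∈ Set.Ioo (0 : ℝ) 1)
    (p : ℝ) (hp : ∀ j, condP viol j (fun _ => none) ≤ p)
    (hpp' : p ≤ p' / (10 * (Δ : ℝ) ^ 3))
    (L : ℝ) (hL : 0 ≤ L) :
    (((Finset.univ.filter fun ω : Fin n → Fin q =>
          ∃ B : Finset (Fin m), (∀ j ∈ B, j ∈ dangerous vbl viol p' ω) ∧
            L ≤ (B.card : ℝ) ∧
            ((constraintGraphSq vbl).induce (B : Set (Fin m))).Connected).card : ℝ))
        / (q : ℝ) ^ n
      ≤ (n : ℝ) * Δ * (2 : ℝ) ^ (-(L / Δ)) := by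
  classical
  have hp'pos : 0 < p' := hp'.1
  have hd : (0:ℝ) < (Δ:ℝ) := by exact_mod_cast hΔ
  have hd1 : (1:ℝ) ≤ (Δ:ℝ) := by exact_mod_cast hΔ
  have hqn : (0:ℝ) < (q:ℝ)^n := by positivity
  have hRHS0 : (0:ℝ) ≤ (n : ℝ) * Δ * (2 : ℝ) ^ (-(L / Δ)) := by positivity
  rcases (Finset.univ.filter fun ω : Fin n → Fin q =>
      ∃ B : Finset (Fin m), (∀ j ∈ B, j ∈ dangerous vbl viol p' ω) ∧
        L ≤ (B.card : ℝ) ∧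
        ((constraintGraphSq vbl).induce (B : Set (Fin m))).Connected).eq_empty_or_nonempty
    with hE | hEne
  · rw [hE]
    simpa using hRHS0
  -- a dangerous constraint exists, so `0 ≤ p`
  obtain ⟨ω₀, hω₀⟩ := hEne
  rw [Finset.mem_filter] at hω₀
  obtain ⟨-, B₀, hB₀d, hB₀L, hB₀conn⟩ := hω₀
  have hB₀ne : B₀.Nonempty := by
    obtain ⟨⟨b, hb⟩⟩ := hB₀conn.nonempty
    exact ⟨b, Finset.mem_coe.mp hb⟩
  obtain ⟨jstar, hjstar⟩ := hB₀ne
  have hp0 : 0 ≤ p := le_trans (condP_nonneg viol jstar (fun _ => none)) (hp jstar)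
  have h10 : (1:ℝ) < 10 * (Δ:ℝ)^3 := by
    have h3 : (1:ℝ) ^ 3 ≤ (Δ:ℝ) ^ 3 := pow_le_pow_left₀ (by norm_num) hd1 3
    rw [one_pow] at h3
    linarith
  have hplt : p < p' := lt_of_le_of_lt hpp' (div_lt_self hp'pos h10)
  have hbase : ∀ j : Fin m, ¬ p' < condP viol j (fun _ => none : Fin n → Option (Fin q)) := by
    intro j hc
    have := hp j
    linarith
  set r := max 1 (Nat.ceil (L / ((Δ:ℝ) + 1))) with hrdef
  have hr1 : 1 ≤ r := le_max_left _ _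
  have hLr : L ≤ (r:ℝ) * ((Δ:ℝ) + 1) := by
    have h1 : L / ((Δ:ℝ) + 1) ≤ ((Nat.ceil (L / ((Δ:ℝ) + 1))) : ℝ) := Nat.le_ceil _
    have h2 : ((Nat.ceil (L / ((Δ:ℝ) + 1))) : ℝ) ≤ (r:ℝ) :=
      Nat.cast_le.mpr (le_max_right 1 (Nat.ceil (L / ((Δ:ℝ) + 1))))
    rw [div_le_iff₀ (by positivity : (0:ℝ) < (Δ:ℝ) + 1)] at h1
    calc L ≤ ((Nat.ceil (L / ((Δ:ℝ) + 1))) : ℝ) * ((Δ:ℝ) + 1) := h1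
      _ ≤ (r:ℝ) * ((Δ:ℝ) + 1) := by
          apply mul_le_mul_of_nonneg_right h2 (by positivity)
  have hdegN : ∀ i, (nbrs vbl i).card ≤ Δ := by
    intro i
    have := hdeg i
    exact_mod_cast this
  have hD : ∀ v, (nbF (HAdj vbl) v).card ≤ Δ * Δ * (Δ - 1) :=
    fun v => card_HAdj_le hΔ hdegN v
  set cbound : ℝ := if r = 1 then 1 else
      2 ^ (2 * r - 1) * ((Δ * Δ * (Δ - 1) : ℕ) : ℝ) ^ (r - 1) with hcb
  have hcb0 : 0 ≤ cbound := by
    rw [hcb]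
    split
    · norm_num
    · positivity
  set w : ℝ := p / p' with hwdef
  have hw0 : 0 ≤ w := div_nonneg hp0 hp'pos.le
  have hw : w ≤ 1 / (10 * (Δ:ℝ)^3) := by
    rw [hwdef, div_le_div_iff₀ hp'pos (by positivity : (0:ℝ) < 10 * (Δ:ℝ)^3)]
    have := (le_div_iff₀ (by positivity : (0:ℝ) < 10 * (Δ:ℝ)^3)).mp hpp'
    linarith
  set eff := Finset.univ.filter (fun j : Fin m => (vbl j).Nonempty) with heffdef
  have hvblne : ∀ (ω : Fin n → Fin q) (j : Fin m),
      j ∈ dangerous vbl viol p' ω → (vbl j).Nonempty := by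
    intro ω j hj
    rw [Finset.nonempty_iff_ne_empty]
    intro hemp
    obtain ⟨h, _, _, hdd⟩ := hj
    rw [condP_of_vbl_empty hq hdep j hemp] at hdd
    exact hbase j hdd
  set TT : Fin m → Finset (Finset (Fin m)) := fun j₀ => Finset.univ.filter
      (fun T : Finset (Fin m) => Linked (HAdj vbl) j₀ T ∧ T.card = r ∧
        ∀ j ∈ T, ∀ k ∈ T, j ≠ k → vbl j ∩ vbl k = ∅) with hTTdef
  set DS : Finset (Fin m) → Finset (Fin n → Fin q) := fun T => Finset.univ.filter
      (fun ω => ∀ j ∈ T, p' < condP viol j (greedyRun vbl viol p' ω n).1) with hDSdef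
  have hsub : (Finset.univ.filter fun ω : Fin n → Fin q =>
      ∃ B : Finset (Fin m), (∀ j ∈ B, j ∈ dangerous vbl viol p' ω) ∧
        L ≤ (B.card : ℝ) ∧
        ((constraintGraphSq vbl).induce (B : Set (Fin m))).Connected)
      ⊆ eff.biUnion (fun j₀ => (TT j₀).biUnion DS) := by
    intro ω hω
    rw [Finset.mem_filter] at hω
    obtain ⟨-, B, hBd, hBL, hBconn⟩ := hω
    have hBne : B.Nonempty := by
      obtain ⟨⟨b, hb⟩⟩ := hBconn.nonempty
      exact ⟨b, Finset.mem_coe.mp hb⟩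
    obtain ⟨T₀, hT₀B, hT₀link, hT₀disj, hT₀card⟩ := extraction hdegN hBconn hBne
    have hrT : r ≤ T₀.card := by
      apply max_le
      · exact Finset.card_pos.mpr ⟨_, hT₀link.root_mem⟩
      · apply Nat.ceil_le.mpr
        rw [div_le_iff₀ (by positivity : (0:ℝ) < (Δ:ℝ) + 1)]
        calc L ≤ (B.card : ℝ) := hBL
          _ ≤ (T₀.card : ℝ) * ((Δ:ℝ) + 1) := by exact_mod_cast hT₀card
    obtain ⟨T, hTsub, hTlink, hTcard⟩ := hT₀link.shrink r hr1 hrT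
    rw [Finset.mem_biUnion]
    refine ⟨B.min' hBne, ?_, ?_⟩
    · rw [heffdef, Finset.mem_filter]
      exact ⟨Finset.mem_univ _, hvblne ω _ (hBd _ (B.min'_mem hBne))⟩
    rw [Finset.mem_biUnion]
    refine ⟨T, ?_, ?_⟩
    · rw [hTTdef, Finset.mem_filter]
      refine ⟨Finset.mem_univ _, hTlink, hTcard, ?_⟩
      intro j hj k hk hjk
      exact hT₀disj j (hTsub hj) k (hTsub hk) hjk
    · rw [hDSdef, Finset.mem_filter]
      refine ⟨Finset.mem_univ _, ?_⟩
      intro j hj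
      exact dangerous_at_n vbl viol p' ω hq hdep (hbase j) (hBd j (hT₀B (hTsub hj)))
  have hDSbound : ∀ j₀ : Fin m, ∀ T ∈ TT j₀,
      ((DS T).card : ℝ) ≤ (q:ℝ)^n * w ^ r := by
    intro j₀ T hT
    rw [hTTdef, Finset.mem_filter] at hT
    obtain ⟨-, hTlink, hTcard, hTdisj⟩ := hT
    have h1 := card_dangerous_le vbl viol p' hq hdep hTdisj hp'pos
    have h2 : ∏ j ∈ T, condP viol j (fun _ => none : Fin n → Option (Fin q)) ≤ p ^ r := by
      rw [← hTcard, ← Finset.prod_const]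
      exact Finset.prod_le_prod (fun j _ => condP_nonneg viol j _) (fun j _ => hp j)
    have h3 : ((DS T).card : ℝ) * p' ^ r ≤ (q:ℝ)^n * p ^ r := by
      rw [← hTcard]
      calc ((DS T).card : ℝ) * p' ^ T.card ≤ (q:ℝ)^n *
            ∏ j ∈ T, condP viol j (fun _ => none : Fin n → Option (Fin q)) := h1
        _ ≤ (q:ℝ)^n * p ^ T.card := by
            apply mul_le_mul_of_nonneg_left _ hqn.le
            rw [hTcard]
            exact h2
    have hp'r : (0:ℝ) < p' ^ r := pow_pos hp'pos r
    rw [hwdef, div_pow, ← mul_div_assoc, le_div_iff₀ hp'r]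
    exact h3
  have hTTbound : ∀ j₀ : Fin m, ((TT j₀).card : ℝ) ≤ cbound := by
    intro j₀
    have hsub2 : TT j₀ ⊆ Finset.univ.filter
        (fun T : Finset (Fin m) => Linked (HAdj vbl) j₀ T ∧ T.card = r) := by
      intro T hT
      rw [hTTdef, Finset.mem_filter] at hT
      rw [Finset.mem_filter]
      exact ⟨hT.1, hT.2.1, hT.2.2.1⟩
    rw [hcb]
    split
    · next hreq =>
      rw [hreq] at hsub2
      have := (Finset.card_le_card hsub2).trans (card_linked_one j₀)
      exact_mod_cast this
    · next hreq =>
      have := (Finset.card_le_card hsub2).trans (card_linked_le hD j₀ hr1)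
      exact_mod_cast this
  -- assemble
  have heff : ((eff.card : ℝ)) ≤ (n : ℝ) * ((Δ:ℝ) + 1) := by
    have := card_effective_le hdegN
    calc ((eff.card : ℝ)) ≤ ((n * (Δ + 1) : ℕ) : ℝ) := by exact_mod_cast this
      _ = (n : ℝ) * ((Δ:ℝ) + 1) := by push_cast; ring
  have hcount : ((Finset.univ.filter fun ω : Fin n → Fin q =>
      ∃ B : Finset (Fin m), (∀ j ∈ B, j ∈ dangerous vbl viol p' ω) ∧
        L ≤ (B.card : ℝ) ∧
        ((constraintGraphSq vbl).induce (B : Set (Fin m))).Connected).card : ℝ)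
      ≤ (eff.card : ℝ) * (cbound * ((q:ℝ)^n * w ^ r)) := by
    have hnat : (Finset.univ.filter fun ω : Fin n → Fin q =>
        ∃ B : Finset (Fin m), (∀ j ∈ B, j ∈ dangerous vbl viol p' ω) ∧
          L ≤ (B.card : ℝ) ∧
          ((constraintGraphSq vbl).induce (B : Set (Fin m))).Connected).card
        ≤ ∑ j₀ ∈ eff, ∑ T ∈ TT j₀, (DS T).card := by
      calc _ ≤ (eff.biUnion (fun j₀ => (TT j₀).biUnion DS)).card := Finset.card_le_card hsub
        _ ≤ ∑ j₀ ∈ eff, ((TT j₀).biUnion DS).card := Finset.card_biUnion_le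
        _ ≤ ∑ j₀ ∈ eff, ∑ T ∈ TT j₀, (DS T).card :=
            Finset.sum_le_sum (fun j₀ _ => Finset.card_biUnion_le)
    calc ((Finset.univ.filter fun ω : Fin n → Fin q =>
        ∃ B : Finset (Fin m), (∀ j ∈ B, j ∈ dangerous vbl viol p' ω) ∧
          L ≤ (B.card : ℝ) ∧
          ((constraintGraphSq vbl).induce (B : Set (Fin m))).Connected).card : ℝ)
        ≤ ((∑ j₀ ∈ eff, ∑ T ∈ TT j₀, (DS T).card : ℕ) : ℝ) := by exact_mod_cast hnat
      _ = ∑ j₀ ∈ eff, ∑ T ∈ TT j₀, ((DS T).card : ℝ) := by push_cast; rfl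
      _ ≤ ∑ j₀ ∈ eff, ∑ _T ∈ TT j₀, ((q:ℝ)^n * w ^ r) :=
          Finset.sum_le_sum (fun j₀ _ => Finset.sum_le_sum (fun T hT => hDSbound j₀ T hT))
      _ = ∑ j₀ ∈ eff, ((TT j₀).card : ℝ) * ((q:ℝ)^n * w ^ r) := by
          refine Finset.sum_congr rfl fun j₀ _ => ?_
          rw [Finset.sum_const, nsmul_eq_mul]
      _ ≤ ∑ _j₀ ∈ eff, cbound * ((q:ℝ)^n * w ^ r) := by
          apply Finset.sum_le_sum
          intro j₀ _
          apply mul_le_mul_of_nonneg_right (hTTbound j₀) (by positivity)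
      _ = (eff.card : ℝ) * (cbound * ((q:ℝ)^n * w ^ r)) := by
          rw [Finset.sum_const, nsmul_eq_mul]
  rw [div_le_iff₀ hqn]
  have hnum := numeric_main Δ r hΔ hr1 cbound hcb0 (le_of_eq hcb) w hw0 hw L hL hLr
  calc ((Finset.univ.filter fun ω : Fin n → Fin q =>
      ∃ B : Finset (Fin m), (∀ j ∈ B, j ∈ dangerous vbl viol p' ω) ∧
        L ≤ (B.card : ℝ) ∧
        ((constraintGraphSq vbl).induce (B : Set (Fin m))).Connected).card : ℝ)
      ≤ (eff.card : ℝ) * (cbound * ((q:ℝ)^n * w ^ r)) := hcount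
    _ ≤ ((n : ℝ) * ((Δ:ℝ) + 1)) * (cbound * ((q:ℝ)^n * w ^ r)) := by
        apply mul_le_mul_of_nonneg_right heff (by positivity)
    _ = (n : ℝ) * (((Δ:ℝ) + 1) * cbound * w ^ r) * (q:ℝ)^n := by ring
    _ ≤ (n : ℝ) * ((Δ:ℝ) * (2:ℝ) ^ (-(L / (Δ:ℝ)))) * (q:ℝ)^n := by
        apply mul_le_mul_of_nonneg_right _ hqn.le
        apply mul_le_mul_of_nonneg_left hnum (by positivity)
    _ = (n : ℝ) * (Δ:ℝ) * (2:ℝ) ^ (-(L / (Δ:ℝ))) * (q:ℝ)^n := by ring
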